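/- arXiv:1409.6072 — 8 statements merged into one kernel-verified Lean document; each statement's English description precedes it below -/
import Mathlib

section
/- Let n ≥ 2, K a field, S = K[x_1,…,x_n], and I = I(P_n) the edge ideal of the path P_n. Then sdepth(S/I) = ⌈n/3⌉. -/
open MvPolynomial

/-- The edge ideal `I(P_m)` of the path `P_m` on vertices `x_1, …, x_m`
(0-indexed as `X 0, …, X (m-1)`), regarded as an ideal of `S = K[x_1, …, x_n]`:
it is generated by the monomials `X i * X (i+1)` for `i + 2 ≤ m`
(1-indexed: `x_i x_{i+1}` for `1 ≤ i ≤ m - 1`). -/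
noncomputable def pathIdeal (K : Type*) [Field K] (n m : ℕ) :
    Ideal (MvPolynomial (Fin n) K) :=
  Ideal.span {p | ∃ i j : Fin n, (j : ℕ) = (i : ℕ) + 1 ∧ (i : ℕ) + 2 ≤ m ∧ p = X i * X j}

/-- A (combinatorial) Stanley decomposition of `S/I` for a monomial ideal `I` of
`S = K[x_1, …, x_n]`: a finite family of Stanley spaces `u K[Z]`, encoded as pairs
`(u, Z)` of an exponent vector `u` and a set of variables `Z`, such that each
Stanley space consists of monomials not in `I` (so `u K[Z]` is a free
`K[Z]`-module inside `S/I`) and every monomial not in `I` lies in exactly one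
Stanley space (so `S/I` is the direct sum of the Stanley spaces as `ℤⁿ`-graded
`K`-vector spaces). -/
def IsStanleyDecomp {K : Type*} [Field K] {n : ℕ} (I : Ideal (MvPolynomial (Fin n) K))
    (D : Finset ((Fin n →₀ ℕ) × Finset (Fin n))) : Prop :=
  (∀ p ∈ D, ∀ v : Fin n →₀ ℕ, v.support ⊆ p.2 → (monomial (p.1 + v) (1 : K)) ∉ I) ∧
  ∀ a : Fin n →₀ ℕ, (monomial a (1 : K)) ∉ I →
    ∃! p : (Fin n →₀ ℕ) × Finset (Fin n), p ∈ D ∧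
      ∃ v : Fin n →₀ ℕ, v.support ⊆ p.2 ∧ a = p.1 + v

/-- The Stanley depth `sdepth (S/I)` of the quotient by a monomial ideal `I`:
the largest `s` such that some Stanley decomposition of `S/I` has all its
Stanley spaces of dimension `|Z| ≥ s`. -/
noncomputable def sdepth {K : Type*} [Field K] {n : ℕ}
    (I : Ideal (MvPolynomial (Fin n) K)) : ℕ :=
  sSup {s : ℕ | ∃ D, IsStanleyDecomp I D ∧ ∀ p ∈ D, s ≤ p.2.card}

namespace SdepthPath

/-- `a` has support in `[k, n)` containing no two consecutive indices. -/
def Ok (n k : ℕ) (a : Fin n →₀ ℕ) : Prop :=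
  (∀ i : Fin n, a i ≠ 0 → k ≤ (i : ℕ)) ∧
  (∀ i j : Fin n, (j : ℕ) = (i : ℕ) + 1 → a i = 0 ∨ a j = 0)

/-- Combinatorial Stanley decomposition for the set of monomials satisfying `Q`. -/
def StD (n : ℕ) (Q : (Fin n →₀ ℕ) → Prop)
    (D : Finset ((Fin n →₀ ℕ) × Finset (Fin n))) : Prop :=
  (∀ p ∈ D, ∀ v : Fin n →₀ ℕ, v.support ⊆ p.2 → Q (p.1 + v)) ∧
  ∀ a : Fin n →₀ ℕ, Q a →
    ∃! p : (Fin n →₀ ℕ) × Finset (Fin n), p ∈ D ∧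
      ∃ v : Fin n →₀ ℕ, v.support ⊆ p.2 ∧ a = p.1 + v

lemma ok_zero (n k : ℕ) : Ok n k 0 :=
  ⟨fun _ hi => absurd rfl hi, fun _ _ _ => Or.inl rfl⟩

lemma ok_add_single {n k k' : ℕ} {b : Fin n →₀ ℕ} (hb : Ok n k' b) (t : Fin n)
    (hk : k ≤ (t : ℕ)) (ht : (t : ℕ) + 2 ≤ k') (hkk : k ≤ k') (c : ℕ) :
    Ok n k (b + Finsupp.single t c) := by
  obtain ⟨h1, h2⟩ := hb
  constructor
  · intro i hi
    rw [Finsupp.add_apply, Finsupp.single_apply] at hi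
    rcases eq_or_ne t i with rfl | hne
    · exact hk
    · rw [if_neg hne, add_zero] at hi
      exact le_trans hkk (h1 i hi)
  · intro i j hij
    by_contra hc
    push_neg at hc
    obtain ⟨hi, hj⟩ := hc
    rw [Finsupp.add_apply, Finsupp.single_apply] at hi hj
    rcases eq_or_ne t i with rfl | hnei
    · have hnej : t ≠ j := by intro h; rw [← h] at hij; omega
      rw [if_neg hnej, add_zero] at hj
      have := h1 j hj
      omega
    · rw [if_neg hnei, add_zero] at hi
      have hki := h1 i hi
      rcases eq_or_ne t j with rfl | hnej
      · omega
      · rw [if_neg hnej, add_zero] at hj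
        rcases h2 i j hij with h | h
        · exact hi h
        · exact hj h

lemma erase_eq_self {n : ℕ} {f : Fin n →₀ ℕ} {t : Fin n} (h : f t = 0) : f.erase t = f := by
  ext i
  rcases eq_or_ne i t with rfl | h'
  · rw [Finsupp.erase_same, h]
  · rw [Finsupp.erase_ne h']

lemma erase_zero_of {n : ℕ} {f : Fin n →₀ ℕ} {t i : Fin n} (h : f i = 0) :
    (f.erase t) i = 0 := by
  rcases eq_or_ne i t with rfl | h'
  · exact Finsupp.erase_same
  · rw [Finsupp.erase_ne h']; exact h

lemma erase_support_subset {n : ℕ} {v : Fin n →₀ ℕ} {t : Fin n} {Z : Finset (Fin n)}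
    (hv : v.support ⊆ insert t Z) : (v.erase t).support ⊆ Z := by
  intro i hi
  rw [Finsupp.mem_support_iff] at hi
  rcases eq_or_ne i t with rfl | h'
  · rw [Finsupp.erase_same] at hi; exact absurd rfl hi
  · rw [Finsupp.erase_ne h'] at hi
    rcases Finset.mem_insert.mp (hv (Finsupp.mem_support_iff.mpr hi)) with h | h
    · exact absurd h h'
    · exact h

lemma support_add_single_subset {n : ℕ} {w : Fin n →₀ ℕ} {Z : Finset (Fin n)} {t : Fin n}
    (hw : w.support ⊆ Z) (c : ℕ) : (w + Finsupp.single t c).support ⊆ insert t Z := by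
  intro x hx
  rw [Finsupp.mem_support_iff, Finsupp.add_apply] at hx
  rcases eq_or_ne x t with rfl | hne
  · exact Finset.mem_insert_self _ _
  · rw [Finsupp.single_eq_of_ne' (Ne.symm hne), add_zero] at hx
    exact Finset.mem_insert_of_mem (hw (Finsupp.mem_support_iff.mpr hx))

lemma std_elt_facts {n k : ℕ} {D : Finset ((Fin n →₀ ℕ) × Finset (Fin n))}
    (hD : StD n (Ok n k) D) {p} (hp : p ∈ D) (t : Fin n) (hlt : (t : ℕ) < k) :
    p.1 t = 0 ∧ t ∉ p.2 := by
  have h0 := hD.1 p hp 0 (by simp)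
  rw [add_zero] at h0
  refine ⟨?_, ?_⟩
  · by_contra h
    have := h0.1 t h
    omega
  · intro ht
    have hsub : (Finsupp.single t 1).support ⊆ p.2 := by
      intro x hx
      rw [Finsupp.mem_support_iff, Finsupp.single_apply] at hx
      rcases eq_or_ne t x with rfl | hne
      · exact ht
      · rw [if_neg hne] at hx; exact absurd rfl hx
    have h1 := hD.1 p hp _ hsub
    have h2 := h1.1 t (by rw [Finsupp.add_apply, Finsupp.single_eq_same]; omega)
    omega

theorem lower (n m : ℕ) : ∀ k : ℕ, n ≤ k + m →
    ∃ D : Finset ((Fin n →₀ ℕ) × Finset (Fin n)),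
      StD n (Ok n k) D ∧ ∀ p ∈ D, (n - k + 2) / 3 ≤ p.2.card := by
  induction m using Nat.strong_induction_on with
  | _ m ih =>
  intro k hk
  by_cases hA : n ≤ k
  · refine ⟨{(0, ∅)}, ⟨?_, ?_⟩, ?_⟩
    · intro p hp v hv
      rw [Finset.mem_singleton] at hp; subst hp
      have hv0 : v = 0 := Finsupp.support_eq_empty.mp (Finset.subset_empty.mp hv)
      subst hv0
      show Ok n k (0 + 0)
      rw [add_zero]
      exact ok_zero n k
    · intro a ha
      have ha0 : a = 0 := by
        ext i
        by_contra h
        have h1 := ha.1 i h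
        have h2 := i.isLt
        omega
      refine ⟨(0, ∅), ⟨Finset.mem_singleton_self _, 0, by simp, by simp [ha0]⟩, ?_⟩
      rintro q ⟨hq, -⟩
      exact Finset.mem_singleton.mp hq
    · intro p hp
      rw [Finset.mem_singleton] at hp; subst hp
      show (n - k + 2) / 3 ≤ (∅ : Finset (Fin n)).card
      rw [Finset.card_empty]
      omega
  by_cases hB : n ≤ k + 1
  · have hkn : k < n := by omega
    set t : Fin n := ⟨k, hkn⟩ with hthm
    have htv : (t : ℕ) = k := rfl
    refine ⟨{(0, {t})}, ⟨?_, ?_⟩, ?_⟩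
    · intro p hp v hv
      rw [Finset.mem_singleton] at hp; subst hp
      show Ok n k (0 + v)
      rw [zero_add]
      constructor
      · intro i hi
        have h2 := Finset.mem_singleton.mp (hv (Finsupp.mem_support_iff.mpr hi))
        have h3 : (i : ℕ) = k := by rw [h2]
        omega
      · intro i j hij
        by_contra hc
        push_neg at hc
        have hit := Finset.mem_singleton.mp (hv (Finsupp.mem_support_iff.mpr hc.1))
        have hjt := Finset.mem_singleton.mp (hv (Finsupp.mem_support_iff.mpr hc.2))
        rw [hit, hjt] at hij
        omega
    · intro a ha
      refine ⟨(0, {t}), ⟨Finset.mem_singleton_self _, a, ?_, (zero_add a).symm⟩, ?_⟩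
      · intro i hi
        rw [Finsupp.mem_support_iff] at hi
        have h1 := ha.1 i hi
        have h2 := i.isLt
        rw [Finset.mem_singleton]
        exact Fin.ext (by omega)
      · rintro q ⟨hq, -⟩
        exact Finset.mem_singleton.mp hq
    · intro p hp
      rw [Finset.mem_singleton] at hp; subst hp
      show (n - k + 2) / 3 ≤ ({t} : Finset (Fin n)).card
      rw [Finset.card_singleton]
      omega
  · -- main case : k + 2 ≤ n
    have hk2 : k + 2 ≤ n := by omega
    have hm2 : 2 ≤ m := by omega
    obtain ⟨D2, hD2, hc2⟩ := ih (m - 2) (by omega) (k + 2) (by omega)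
    obtain ⟨D3, hD3, hc3⟩ := ih (m - 3) (by omega) (k + 3) (by omega)
    set vk : Fin n := ⟨k, by omega⟩ with hvk
    set vk1 : Fin n := ⟨k + 1, by omega⟩ with hvk1
    have hvkv : (vk : ℕ) = k := rfl
    have hvk1v : (vk1 : ℕ) = k + 1 := rfl
    have hfacts2 : ∀ p ∈ D2, p.1 vk = 0 ∧ vk ∉ p.2 ∧ p.1 vk1 = 0 ∧ vk1 ∉ p.2 := by
      intro p hp
      obtain ⟨h1, h2⟩ := std_elt_facts hD2 hp vk (by omega)
      obtain ⟨h3, h4⟩ := std_elt_facts hD2 hp vk1 (by omega)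
      exact ⟨h1, h2, h3, h4⟩
    have hfacts3 : ∀ p ∈ D3, p.1 vk1 = 0 ∧ vk1 ∉ p.2 := by
      intro p hp
      exact std_elt_facts hD3 hp vk1 (by omega)
    refine ⟨D2.image (fun p => (p.1, insert vk p.2)) ∪
            D3.image (fun p => (p.1 + Finsupp.single vk1 1, insert vk1 p.2)), ⟨?_, ?_⟩, ?_⟩
    · -- condition 1
      intro q hq v hv
      rcases Finset.mem_union.mp hq with h | h
      · obtain ⟨p, hp, rfl⟩ := Finset.mem_image.mp h
        show Ok n k (p.1 + v)
        have hsub : (v.erase vk).support ⊆ p.2 := erase_support_subset hv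
        have h1 := hD2.1 p hp _ hsub
        have h2 := ok_add_single (k := k) h1 vk (by omega) (by omega) (by omega) (v vk)
        rwa [add_assoc, Finsupp.erase_add_single] at h2
      · obtain ⟨p, hp, rfl⟩ := Finset.mem_image.mp h
        show Ok n k (p.1 + Finsupp.single vk1 1 + v)
        have hsub : (v.erase vk1).support ⊆ p.2 := erase_support_subset hv
        have h1 := hD3.1 p hp _ hsub
        have h2 := ok_add_single (k := k) h1 vk1 (by omega) (by omega) (by omega) (1 + v vk1)
        have he : p.1 + Finsupp.single vk1 1 + v
            = p.1 + v.erase vk1 + Finsupp.single vk1 (1 + v vk1) := by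
          ext i
          rcases eq_or_ne i vk1 with rfl | hne
          · simp only [Finsupp.add_apply, Finsupp.single_eq_same, Finsupp.erase_same]
            omega
          · simp only [Finsupp.add_apply, Finsupp.single_eq_of_ne' (Ne.symm hne),
              Finsupp.erase_ne hne, add_zero]
        rw [he]
        exact h2
    · -- condition 2 (covering)
      intro a ha
      by_cases hav : a vk1 = 0
      · -- type 1
        have hb : Ok n (k + 2) (a.erase vk) := by
          constructor
          · intro i hi
            rcases eq_or_ne i vk with rfl | hne
            · rw [Finsupp.erase_same] at hi; exact absurd rfl hi
            · rw [Finsupp.erase_ne hne] at hi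
              have h1 := ha.1 i hi
              have h2 : (i : ℕ) ≠ k := fun h => hne (Fin.ext h)
              have h3 : (i : ℕ) ≠ k + 1 := by
                intro h
                have hi1 : i = vk1 := Fin.ext h
                rw [hi1] at hi
                exact hi hav
              omega
          · intro i j hij
            rcases ha.2 i j hij with h | h
            · exact Or.inl (erase_zero_of h)
            · exact Or.inr (erase_zero_of h)
        obtain ⟨p, ⟨hpD, w, hw, hbw⟩, hup⟩ := hD2.2 _ hb
        obtain ⟨hp1, hp2, hp3, hp4⟩ := hfacts2 p hpD
        refine ⟨(p.1, insert vk p.2),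
          ⟨Finset.mem_union_left _ (Finset.mem_image_of_mem _ hpD),
           w + Finsupp.single vk (a vk), support_add_single_subset hw (a vk), ?_⟩, ?_⟩
        · rw [← add_assoc, ← hbw, Finsupp.erase_add_single]
        · rintro q ⟨hqD, w', hw', haw'⟩
          rcases Finset.mem_union.mp hqD with h | h
          · obtain ⟨p', hp', rfl⟩ := Finset.mem_image.mp h
            obtain ⟨hp1', hp2', _, _⟩ := hfacts2 p' hp'
            have hmem : a.erase vk = p'.1 + w'.erase vk := by
              rw [haw']
              show ((p'.1 + w').erase vk) = p'.1 + w'.erase vk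
              rw [Finsupp.erase_add, erase_eq_self hp1']
            have hpp := hup p' ⟨hp', w'.erase vk, erase_support_subset hw', hmem⟩
            rw [hpp]
          · obtain ⟨p', hp', rfl⟩ := Finset.mem_image.mp h
            exfalso
            have hval := DFunLike.congr_fun haw' vk1
            simp only [Finsupp.add_apply, Finsupp.single_eq_same] at hval
            omega
      · -- type 2
        have havk : a vk = 0 := by
          rcases ha.2 vk vk1 rfl with h | h
          · exact h
          · exact absurd h hav
        have havk2 : ∀ i : Fin n, (i : ℕ) = k + 2 → a i = 0 := by
          intro i hi
          rcases ha.2 vk1 i (show (i : ℕ) = k + 1 + 1 by omega) with h | h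
          · exact absurd h hav
          · exact h
        have hb : Ok n (k + 3) (a.erase vk1) := by
          constructor
          · intro i hi
            rcases eq_or_ne i vk1 with rfl | hne
            · rw [Finsupp.erase_same] at hi; exact absurd rfl hi
            · rw [Finsupp.erase_ne hne] at hi
              have h1 := ha.1 i hi
              have h2 : (i : ℕ) ≠ k := by
                intro h
                have : i = vk := Fin.ext h
                rw [this] at hi
                exact hi havk
              have h3 : (i : ℕ) ≠ k + 1 := fun h => hne (Fin.ext h)
              have h4 : (i : ℕ) ≠ k + 2 := fun h => hi (havk2 i h)
              omega
          · intro i j hij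
            rcases ha.2 i j hij with h | h
            · exact Or.inl (erase_zero_of h)
            · exact Or.inr (erase_zero_of h)
        obtain ⟨p, ⟨hpD, w, hw, hbw⟩, hup⟩ := hD3.2 _ hb
        obtain ⟨hp1, hp2⟩ := hfacts3 p hpD
        have hwvk1 : w vk1 = 0 := by
          by_contra h
          exact hp2 (hw (Finsupp.mem_support_iff.mpr h))
        have hai : ∀ i, (a.erase vk1) i = p.1 i + w i := by
          intro i
          rw [hbw, Finsupp.add_apply]
        refine ⟨(p.1 + Finsupp.single vk1 1, insert vk1 p.2),
          ⟨Finset.mem_union_right _ (Finset.mem_image_of_mem _ hpD),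
           w + Finsupp.single vk1 (a vk1 - 1),
           support_add_single_subset hw (a vk1 - 1), ?_⟩, ?_⟩
        · show a = p.1 + Finsupp.single vk1 1 + (w + Finsupp.single vk1 (a vk1 - 1))
          ext i
          rcases eq_or_ne i vk1 with rfl | hne
          · have h0 := hai vk1
            rw [Finsupp.erase_same] at h0
            simp only [Finsupp.add_apply, Finsupp.single_eq_same]
            omega
          · have h0 := hai i
            rw [Finsupp.erase_ne hne] at h0
            simp only [Finsupp.add_apply, Finsupp.single_eq_of_ne' (Ne.symm hne), add_zero]
            omega
        · rintro q ⟨hqD, w', hw', haw'⟩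
          rcases Finset.mem_union.mp hqD with h | h
          · obtain ⟨p', hp', rfl⟩ := Finset.mem_image.mp h
            exfalso
            obtain ⟨_, _, hp3', hp4'⟩ := hfacts2 p' hp'
            have hw'vk1 : w' vk1 = 0 := by
              by_contra hcon
              rcases Finset.mem_insert.mp (hw' (Finsupp.mem_support_iff.mpr hcon)) with h' | h'
              · have : (k : ℕ) + 1 = k := congrArg Fin.val h'
                omega
              · exact hp4' h'
            have hval : a vk1 = p'.1 vk1 + w' vk1 := by
              rw [haw']
              show (p'.1 + w') vk1 = _
              rw [Finsupp.add_apply]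
            omega
          · obtain ⟨p', hp', rfl⟩ := Finset.mem_image.mp h
            obtain ⟨hp1', hp2'⟩ := hfacts3 p' hp'
            have hmem : a.erase vk1 = p'.1 + w'.erase vk1 := by
              ext i
              rcases eq_or_ne i vk1 with rfl | hne
              · simp [Finsupp.erase_same, hp1']
              · have h0 := DFunLike.congr_fun haw' i
                simp only [Finsupp.add_apply,
                  Finsupp.single_eq_of_ne' (Ne.symm hne), add_zero] at h0
                rw [Finsupp.erase_ne hne, Finsupp.add_apply, Finsupp.erase_ne hne]
                omega
            have hpp := hup p' ⟨hp', w'.erase vk1, erase_support_subset hw', hmem⟩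
            rw [hpp]
    · -- cards
      intro q hq
      rcases Finset.mem_union.mp hq with h | h
      · obtain ⟨p, hp, rfl⟩ := Finset.mem_image.mp h
        have hcle := hc2 p hp
        show (n - k + 2) / 3 ≤ (insert vk p.2).card
        rw [Finset.card_insert_of_notMem (hfacts2 p hp).2.1]
        omega
      · obtain ⟨p, hp, rfl⟩ := Finset.mem_image.mp h
        have hcle := hc3 p hp
        show (n - k + 2) / 3 ≤ (insert vk1 p.2).card
        rw [Finset.card_insert_of_notMem (hfacts3 p hp).2]
        omega

theorem upper (n : ℕ) (hn : 1 ≤ n) (D : Finset ((Fin n →₀ ℕ) × Finset (Fin n))) (s : ℕ)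
    (hD : StD n (Ok n 0) D) (hc : ∀ p ∈ D, s ≤ p.2.card) : s ≤ (n + 2) / 3 := by
  set q := (n + 2) / 3 with hq
  have hq1 : 1 ≤ q := by omega
  set T : Finset (Fin n) := (Finset.range q).image
      (fun j => (⟨min (3 * j + 1) (n - 1), by omega⟩ : Fin n)) with hT
  have hTmem : ∀ i : Fin n, i ∈ T ↔ ∃ j, j < q ∧ (i : ℕ) = min (3 * j + 1) (n - 1) := by
    intro i
    constructor
    · intro h
      obtain ⟨j, hj, hji⟩ := Finset.mem_image.mp h
      exact ⟨j, Finset.mem_range.mp hj, by rw [← hji]⟩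
    · rintro ⟨j, hj, hji⟩
      exact Finset.mem_image.mpr ⟨j, Finset.mem_range.mpr hj, Fin.ext hji.symm⟩
  set a : Fin n →₀ ℕ := Finsupp.equivFunOnFinite.symm (fun i => if i ∈ T then 1 else 0)
    with haa
  have happ : ∀ i, a i = if i ∈ T then 1 else 0 := fun i => rfl
  have hOk : Ok n 0 a := by
    constructor
    · intro i _
      exact Nat.zero_le _
    · intro i j hij
      by_contra hcon
      push_neg at hcon
      obtain ⟨hi, hj⟩ := hcon
      rw [happ] at hi hj
      have hiT : i ∈ T := by by_contra h; rw [if_neg h] at hi; exact hi rfl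
      have hjT : j ∈ T := by by_contra h; rw [if_neg h] at hj; exact hj rfl
      obtain ⟨j1, hj1, he1⟩ := (hTmem i).mp hiT
      obtain ⟨j2, hj2, he2⟩ := (hTmem j).mp hjT
      have hin := i.isLt
      have hjn := j.isLt
      omega
  obtain ⟨p, ⟨hpD, v, hv, hav⟩, -⟩ := hD.2 a hOk
  have hZT : p.2 ⊆ T := by
    intro i hi
    have hsub : (v + Finsupp.single i 1).support ⊆ p.2 := by
      intro x hx
      rw [Finsupp.mem_support_iff, Finsupp.add_apply] at hx
      rcases eq_or_ne x i with rfl | hne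
      · exact hi
      · rw [Finsupp.single_eq_of_ne' (Ne.symm hne), add_zero] at hx
        exact hv (Finsupp.mem_support_iff.mpr hx)
    have hOk2 := hD.1 p hpD _ hsub
    rw [← add_assoc, ← hav] at hOk2
    by_contra hiT
    have hin := i.isLt
    have hdom : ∃ t : Fin n, t ∈ T ∧ ((t : ℕ) = (i : ℕ) + 1 ∨ (i : ℕ) = (t : ℕ) + 1) := by
      rcases (show (i : ℕ) % 3 = 0 ∨ (i : ℕ) % 3 = 1 ∨ (i : ℕ) % 3 = 2 by omega) with h | h | h
      · by_cases hlast : (i : ℕ) = n - 1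
        · exact absurd ((hTmem i).mpr ⟨q - 1, by omega,
            show (i : ℕ) = min (3 * (q - 1) + 1) (n - 1) by omega⟩) hiT
        · refine ⟨⟨(i : ℕ) + 1, by omega⟩, ?_, Or.inl rfl⟩
          exact (hTmem _).mpr ⟨(i : ℕ) / 3, by omega,
            show (i : ℕ) + 1 = min (3 * ((i : ℕ) / 3) + 1) (n - 1) by omega⟩
      · exact absurd ((hTmem i).mpr ⟨(i : ℕ) / 3, by omega,
          show (i : ℕ) = min (3 * ((i : ℕ) / 3) + 1) (n - 1) by omega⟩) hiT
      · refine ⟨⟨(i : ℕ) - 1, by omega⟩, ?_, Or.inr (show (i : ℕ) = (i : ℕ) - 1 + 1 by omega)⟩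
        exact (hTmem _).mpr ⟨(i : ℕ) / 3, by omega,
          show (i : ℕ) - 1 = min (3 * ((i : ℕ) / 3) + 1) (n - 1) by omega⟩
    obtain ⟨t, htT, hadj⟩ := hdom
    have hat : a t = 1 := by rw [happ, if_pos htT]
    rcases hadj with h | h
    · rcases hOk2.2 i t h with hcon | hcon
      · rw [Finsupp.add_apply, Finsupp.single_eq_same] at hcon
        omega
      · have hne : i ≠ t := by intro hh; rw [hh] at h; omega
        rw [Finsupp.add_apply, Finsupp.single_eq_of_ne' hne] at hcon
        omega
    · rcases hOk2.2 t i h with hcon | hcon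
      · have hne : i ≠ t := by intro hh; rw [hh] at h; omega
        rw [Finsupp.add_apply, Finsupp.single_eq_of_ne' hne] at hcon
        omega
      · rw [Finsupp.add_apply, Finsupp.single_eq_same] at hcon
        omega
  calc s ≤ p.2.card := hc p hpD
    _ ≤ T.card := Finset.card_le_card hZT
    _ ≤ q := le_trans Finset.card_image_le (by rw [Finset.card_range])

open MvPolynomial in
lemma mem_path_iff {K : Type*} [Field K] {n : ℕ} (a : Fin n →₀ ℕ) :
    (monomial a (1 : K)) ∈ pathIdeal K n n ↔
      ∃ i j : Fin n, (j : ℕ) = (i : ℕ) + 1 ∧ a i ≠ 0 ∧ a j ≠ 0 := by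
  classical
  have hXm : ∀ i : Fin n, (X i : MvPolynomial (Fin n) K) = monomial (Finsupp.single i 1) 1 :=
    fun i => by rw [← X_pow_eq_monomial, pow_one]
  have hset : {p : MvPolynomial (Fin n) K |
        ∃ i j : Fin n, (j : ℕ) = (i : ℕ) + 1 ∧ (i : ℕ) + 2 ≤ n ∧ p = X i * X j}
      = (fun s => monomial s (1 : K)) ''
        {s : Fin n →₀ ℕ | ∃ i j : Fin n, (j : ℕ) = (i : ℕ) + 1 ∧
          s = Finsupp.single i 1 + Finsupp.single j 1} := by
    ext p
    constructor
    · rintro ⟨i, j, hij, hin, rfl⟩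
      exact ⟨Finsupp.single i 1 + Finsupp.single j 1, ⟨i, j, hij, rfl⟩,
        by rw [hXm, hXm, monomial_mul, one_mul]⟩
    · rintro ⟨s, ⟨i, j, hij, rfl⟩, rfl⟩
      have hin : (i : ℕ) + 2 ≤ n := by have := j.isLt; omega
      exact ⟨i, j, hij, hin, by rw [hXm, hXm, monomial_mul, one_mul]⟩
  rw [pathIdeal, hset, mem_ideal_span_monomial_image]
  rw [support_monomial, if_neg (one_ne_zero)]
  constructor
  · intro h
    obtain ⟨si, hsi, hle⟩ := h a (Finset.mem_singleton_self a)
    obtain ⟨i, j, hij, rfl⟩ := hsi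
    have hne : i ≠ j := by intro hh; rw [hh] at hij; omega
    have h1 := Finsupp.le_def.mp hle i
    have h2 := Finsupp.le_def.mp hle j
    rw [Finsupp.add_apply, Finsupp.single_eq_same,
      Finsupp.single_eq_of_ne' (Ne.symm hne), add_zero] at h1
    rw [Finsupp.add_apply, Finsupp.single_eq_same,
      Finsupp.single_eq_of_ne' hne, zero_add] at h2
    exact ⟨i, j, hij, by omega, by omega⟩
  · rintro ⟨i, j, hij, hi, hj⟩ xi hxi
    rw [Finset.mem_singleton] at hxi
    subst hxi
    refine ⟨_, ⟨i, j, hij, rfl⟩, ?_⟩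
    rw [Finsupp.le_def]
    intro x
    rw [Finsupp.add_apply, Finsupp.single_apply, Finsupp.single_apply]
    split_ifs with h1 h2 h2
    · rw [h1, h2] at hij; omega
    · rw [← h1]; omega
    · rw [← h2]; omega
    · omega

open MvPolynomial in
lemma notmem_iff {K : Type*} [Field K] {n : ℕ} (a : Fin n →₀ ℕ) :
    (monomial a (1 : K)) ∉ pathIdeal K n n ↔ Ok n 0 a := by
  rw [mem_path_iff]
  constructor
  · intro h
    refine ⟨fun i _ => Nat.zero_le _, fun i j hij => ?_⟩
    by_contra hc
    push_neg at hc
    exact h ⟨i, j, hij, hc.1, hc.2⟩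
  · rintro ⟨-, h2⟩ ⟨i, j, hij, hi, hj⟩
    rcases h2 i j hij with h | h
    · exact hi h
    · exact hj h

end SdepthPath

/-- For `n ≥ 2` and `I = I(P_n)` the edge ideal of the path `P_n` in
`S = K[x_1, …, x_n]`, one has `sdepth (S/I) = ⌈n/3⌉`. -/
theorem sdepth_pathIdeal {K : Type*} [Field K] (n : ℕ) (hn : 2 ≤ n) :
    (sdepth (pathIdeal K n n) : ℤ) = ⌈(n : ℚ) / 3⌉ := by
  have hsetEq : {s : ℕ | ∃ D, IsStanleyDecomp (pathIdeal K n n) D ∧ ∀ p ∈ D, s ≤ p.2.card}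
      = {s : ℕ | ∃ D, SdepthPath.StD n (SdepthPath.Ok n 0) D ∧ ∀ p ∈ D, s ≤ p.2.card} := by
    ext s
    simp only [Set.mem_setOf_eq]
    refine exists_congr fun D => and_congr_left fun _ => ?_
    unfold IsStanleyDecomp SdepthPath.StD
    constructor
    · rintro ⟨h1, h2⟩
      exact ⟨fun p hp v hv => (SdepthPath.notmem_iff _).mp (h1 p hp v hv),
        fun a ha => h2 a ((SdepthPath.notmem_iff _).mpr ha)⟩
    · rintro ⟨h1, h2⟩
      exact ⟨fun p hp v hv => (SdepthPath.notmem_iff _).mpr (h1 p hp v hv),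
        fun a ha => h2 a ((SdepthPath.notmem_iff _).mp ha)⟩
  have hmem : (n + 2) / 3 ∈
      {s : ℕ | ∃ D, SdepthPath.StD n (SdepthPath.Ok n 0) D ∧ ∀ p ∈ D, s ≤ p.2.card} := by
    obtain ⟨D, hD, hcards⟩ := SdepthPath.lower n n 0 (by omega)
    exact ⟨D, hD, fun p hp => le_trans (le_of_eq (by omega)) (hcards p hp)⟩
  have hub : ∀ s ∈ {s : ℕ | ∃ D, SdepthPath.StD n (SdepthPath.Ok n 0) D ∧
      ∀ p ∈ D, s ≤ p.2.card}, s ≤ (n + 2) / 3 := by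
    rintro s ⟨D, hD, hcards⟩
    exact SdepthPath.upper n (by omega) D s hD hcards
  have hsup : sdepth (pathIdeal K n n) = (n + 2) / 3 := by
    unfold sdepth
    rw [hsetEq]
    exact IsGreatest.csSup_eq ⟨hmem, hub⟩
  rw [hsup]
  set m : ℕ := (n + 2) / 3 with hm
  have h1 : n ≤ 3 * m := by omega
  have h2 : 3 * m ≤ n + 2 := by omega
  have h1q : (n : ℚ) ≤ 3 * (m : ℚ) := by exact_mod_cast h1
  have h2q : 3 * (m : ℚ) ≤ (n : ℚ) + 2 := by exact_mod_cast h2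
  rw [eq_comm, Int.ceil_eq_iff]
  constructor
  · rw [lt_div_iff₀ (by norm_num : (0 : ℚ) < 3)]
    push_cast
    linarith
  · rw [div_le_iff₀ (by norm_num : (0 : ℚ) < 3)]
    push_cast
    linarith
end

section
/- Let n ≥ 2, K a field, S = K[x_1,…,x_n], and I = I(P_n) the edge ideal of the path P_n. Then sdepth(S/I) ≥ ⌈n/3⌉. -/
open MvPolynomial

namespace SD
open Finset

/-- greedy: scan left to right, keep `H`, add `i` if previous not taken and `i+1 ∉ H`. -/
def gb (n : ℕ) (H : Finset ℕ) : ℕ → Bool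
  | 0 => decide (0 < n) && (decide (0 ∈ H) || decide (1 ∉ H))
  | (i+1) => decide (i+1 < n) &&
      (decide ((i+1) ∈ H) || (!(gb n H i) && decide ((i+2) ∉ H)))

def Indep (H : Finset ℕ) : Prop := ∀ i ∈ H, (i+1) ∉ H

instance : DecidablePred Indep := fun _ => Finset.decidableDforallFinset

def gset (n : ℕ) (H : Finset ℕ) : Finset ℕ := (range n).filter (fun i => gb n H i)

variable {n : ℕ} {H H' H1 H2 G : Finset ℕ}

lemma gb_zero_iff : gb n H 0 = true ↔ 0 < n ∧ (0 ∈ H ∨ 1 ∉ H) := by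
  simp [gb]

lemma gb_succ_iff {i : ℕ} : gb n H (i+1) = true ↔
    i+1 < n ∧ ((i+1) ∈ H ∨ (gb n H i = false ∧ (i+2) ∉ H)) := by
  simp [gb]

lemma gb_lt {i : ℕ} (h : gb n H i = true) : i < n := by
  cases i with
  | zero => exact (gb_zero_iff.mp h).1
  | succ i => exact (gb_succ_iff.mp h).1

lemma gb_of_mem {i : ℕ} (hi : i ∈ H) (hin : i < n) : gb n H i = true := by
  cases i with
  | zero => exact gb_zero_iff.mpr ⟨hin, Or.inl hi⟩
  | succ i => exact gb_succ_iff.mpr ⟨hin, Or.inl hi⟩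

lemma mem_gset {i : ℕ} : i ∈ gset n H ↔ i < n ∧ gb n H i = true := by
  simp [gset]

lemma gset_subset_range : gset n H ⊆ range n := filter_subset _ _

lemma subset_gset (hH : H ⊆ range n) : H ⊆ gset n H := by
  intro i hi
  exact mem_gset.mpr ⟨mem_range.mp (hH hi), gb_of_mem hi (mem_range.mp (hH hi))⟩

/-- the greedy result is independent. -/
lemma gb_indep (hH : Indep H) {i : ℕ} (h1 : gb n H i = true)
    (h2 : gb n H (i+1) = true) : False := by
  rcases (gb_succ_iff.mp h2).2 with h | h
  · cases i with
    | zero => rcases (gb_zero_iff.mp h1).2 with h0 | h0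
              · exact hH 0 h0 h
              · exact h0 h
    | succ i => rcases (gb_succ_iff.mp h1).2 with h0 | h0
                · exact hH _ h0 h
                · exact h0.2 h
  · rw [h.1] at h1; exact Bool.noConfusion h1

lemma gset_indep (hH : Indep H) : Indep (gset n H) := by
  intro i hi hi1
  exact gb_indep hH (mem_gset.mp hi).2 (mem_gset.mp hi1).2

/-- domination: if `i < n` is not chosen, then `i-1` is chosen or `i+1 ∈ H`. -/
lemma gb_dom {i : ℕ} (hin : i < n) (h : gb n H i = false) :
    (0 < i ∧ gb n H (i-1) = true) ∨ (i+1) ∈ H := by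
  have h' : ¬ (gb n H i = true) := by simp [h]
  cases i with
  | zero =>
      right
      by_contra h1
      exact h' (gb_zero_iff.mpr ⟨hin, Or.inr h1⟩)
  | succ i =>
      rw [gb_succ_iff] at h'
      push_neg at h'
      rcases h' hin with ⟨-, h2⟩
      by_cases hb : gb n H i = true
      · exact Or.inl ⟨Nat.succ_pos i, hb⟩
      · exact Or.inr (h2 (Bool.eq_false_iff.mpr hb))


lemma gb_false_of_le {i : ℕ} (h : n ≤ i) : gb n H i = false := by
  by_contra hb
  exact absurd (gb_lt (by simpa using hb)) (not_lt.mpr h)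

/-- consistency: if `H ⊆ H' ⊆ g(H)` then the greedy runs agree. -/
lemma gb_consistent (hH : Indep H) (hsub : H ⊆ H') (hsub' : H' ⊆ gset n H) :
    ∀ i, gb n H' i = gb n H i := by
  intro i
  induction i with
  | zero =>
      by_cases hn0 : 0 < n
      · by_cases h0 : 0 ∈ H'
        · rw [gb_zero_iff.mpr ⟨hn0, Or.inl h0⟩, (mem_gset.mp (hsub' h0)).2]
        · by_cases h1 : 1 ∈ H'
          · have hg1 : gb n H 1 = true := (mem_gset.mp (hsub' h1)).2
            have hg0 : gb n H 0 = false := by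
              by_contra hb
              exact gb_indep hH ((by simpa using hb)) hg1
            rw [hg0]
            rw [Bool.eq_false_iff]
            intro hb
            rcases (gb_zero_iff.mp hb).2 with h | h
            · exact h0 h
            · exact h h1
          · have h0H : 0 ∉ H := fun h => h0 (hsub h)
            have h1H : 1 ∉ H := fun h => h1 (hsub h)
            by_cases hb : gb n H 0 = true
            · rw [hb]; exact gb_zero_iff.mpr ⟨hn0, Or.inr h1⟩
            · rw [Bool.eq_false_iff.mpr hb, Bool.eq_false_iff]
              intro hc
              rcases (gb_zero_iff.mp hc).2 with h | h
              · exact h0 h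
              · exact hb (gb_zero_iff.mpr ⟨hn0, Or.inr h1H⟩)
      · rw [gb_false_of_le (Nat.le_of_not_lt hn0), gb_false_of_le (Nat.le_of_not_lt hn0)]
  | succ i ih =>
      by_cases hn0 : i+1 < n
      · by_cases h0 : (i+1) ∈ H'
        · rw [gb_succ_iff.mpr ⟨hn0, Or.inl h0⟩, (mem_gset.mp (hsub' h0)).2]
        · by_cases h1 : (i+2) ∈ H'
          · have hg1 : gb n H (i+2) = true := (mem_gset.mp (hsub' h1)).2
            have hg0 : gb n H (i+1) = false := by
              by_contra hb
              exact gb_indep hH ((by simpa using hb)) hg1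
            rw [hg0, Bool.eq_false_iff]
            intro hb
            rcases (gb_succ_iff.mp hb).2 with h | h
            · exact h0 h
            · exact h.2 h1
          · have h0H : (i+1) ∉ H := fun h => h0 (hsub h)
            have h1H : (i+2) ∉ H := fun h => h1 (hsub h)
            by_cases hb : gb n H (i+1) = true
            · rw [hb]
              rcases (gb_succ_iff.mp hb).2 with h | h
              · exact absurd h h0H
              · exact gb_succ_iff.mpr ⟨hn0, Or.inr ⟨(ih.trans h.1 : _), h1⟩⟩
            · rw [Bool.eq_false_iff.mpr hb, Bool.eq_false_iff]
              intro hc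
              rcases (gb_succ_iff.mp hc).2 with h | h
              · exact h0 h
              · refine hb (gb_succ_iff.mpr ⟨hn0, Or.inr ⟨?_, h1H⟩⟩)
                rw [← ih]; exact h.1
      · rw [gb_false_of_le (Nat.le_of_not_lt hn0), gb_false_of_le (Nat.le_of_not_lt hn0)]


/-- intersection: two sets with the same greedy run agree with their intersection. -/
lemma gb_inter (h1 : Indep H1) (h2 : Indep H2)
    (heq : ∀ i, gb n H1 i = gb n H2 i) : ∀ i, gb n (H1 ∩ H2) i = gb n H1 i := by
  intro i
  induction i with
  | zero =>
      by_cases hn0 : 0 < n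
      · by_cases hb : gb n H1 0 = true
        · rw [hb]
          by_cases hm : 0 ∈ H1 ∩ H2
          · exact gb_zero_iff.mpr ⟨hn0, Or.inl hm⟩
          · refine gb_zero_iff.mpr ⟨hn0, Or.inr fun hc => ?_⟩
            rcases mem_inter.mp hc with ⟨c1, c2⟩
            rcases (gb_zero_iff.mp hb).2 with h | h
            · rcases (gb_zero_iff.mp ((heq 0) ▸ hb)).2 with h' | h'
              · exact hm (mem_inter.mpr ⟨h, h'⟩)
              · exact h' c2
            · exact h c1
        · rw [Bool.eq_false_iff.mpr hb, Bool.eq_false_iff]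
          intro hc
          rcases (gb_zero_iff.mp hc).2 with h | h
          · exact hb (gb_zero_iff.mpr ⟨hn0, Or.inl (mem_inter.mp h).1⟩)
          · have e1 : 1 ∈ H1 := by
              by_contra hx
              exact hb (gb_zero_iff.mpr ⟨hn0, Or.inr hx⟩)
            have hb2 : ¬ gb n H2 0 = true := fun t => hb ((heq 0).symm ▸ t)
            have e2 : 1 ∈ H2 := by
              by_contra hx
              exact hb2 (gb_zero_iff.mpr ⟨hn0, Or.inr hx⟩)
            exact h (mem_inter.mpr ⟨e1, e2⟩)
      · rw [gb_false_of_le (Nat.le_of_not_lt hn0), gb_false_of_le (Nat.le_of_not_lt hn0)]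
  | succ i ih =>
      by_cases hn0 : i+1 < n
      · by_cases hb : gb n H1 (i+1) = true
        · rw [hb]
          by_cases hm : (i+1) ∈ H1 ∩ H2
          · exact gb_succ_iff.mpr ⟨hn0, Or.inl hm⟩
          · refine gb_succ_iff.mpr ⟨hn0, Or.inr ⟨?_, ?_⟩⟩
            · -- gb (H1∩H2) i = false
              rw [ih]
              by_contra hx
              exact gb_indep h1 (by simpa using hx) hb
            · intro hc
              rcases mem_inter.mp hc with ⟨c1, c2⟩
              rcases (gb_succ_iff.mp hb).2 with h | h
              · rcases (gb_succ_iff.mp ((heq (i+1)) ▸ hb)).2 with h' | h'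
                · exact hm (mem_inter.mpr ⟨h, h'⟩)
                · exact h'.2 c2
              · exact h.2 c1
        · rw [Bool.eq_false_iff.mpr hb, Bool.eq_false_iff]
          intro hc
          rcases (gb_succ_iff.mp hc).2 with h | h
          · exact hb (gb_succ_iff.mpr ⟨hn0, Or.inl (mem_inter.mp h).1⟩)
          · have hbi : gb n H1 i = false := ih ▸ h.1
            have e1 : (i+2) ∈ H1 := by
              by_contra hx
              exact hb (gb_succ_iff.mpr ⟨hn0, Or.inr ⟨hbi, hx⟩⟩)
            have hb2 : ¬ gb n H2 (i+1) = true := fun t => hb ((heq (i+1)).symm ▸ t)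
            have e2 : (i+2) ∈ H2 := by
              by_contra hx
              exact hb2 (gb_succ_iff.mpr ⟨hn0, Or.inr ⟨(heq i) ▸ hbi, hx⟩⟩)
            exact h.2 (mem_inter.mpr ⟨e1, e2⟩)
      · rw [gb_false_of_le (Nat.le_of_not_lt hn0), gb_false_of_le (Nat.le_of_not_lt hn0)]

/-- domination gives the size bound `n ≤ 3 |g(H)|`. -/
lemma card_gset (hH : H ⊆ range n) : n ≤ 3 * (gset n H).card := by
  classical
  have := Finset.card_le_mul_card_image_of_maps_to
    (f := fun i => if gb n H i = true then i else
          if 0 < i ∧ gb n H (i-1) = true then i - 1 else i + 1)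
    (s := range n) (t := gset n H) ?_ 3 ?_
  · simpa using this
  · intro i hi
    by_cases hb : gb n H i = true
    · simpa [hb] using mem_gset.mpr ⟨mem_range.mp hi, hb⟩
    · by_cases hx : 0 < i ∧ gb n H (i-1) = true
      · simpa [hb, hx] using
          mem_gset.mpr ⟨lt_of_le_of_lt (Nat.sub_le i 1) (mem_range.mp hi), hx.2⟩
      · rcases gb_dom (mem_range.mp hi) (Bool.eq_false_iff.mpr hb) with h | h
        · exact absurd h hx
        · have hin : i + 1 < n := mem_range.mp (hH h)
          simpa [hb, hx] using mem_gset.mpr ⟨hin, gb_of_mem h hin⟩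
  · intro b _
    refine le_trans (Finset.card_le_card
        (fun x hx => (?_ : x ∈ insert (b+1) (insert b {b-1})))) ?_
    · simp only [mem_filter, mem_range] at hx
      obtain ⟨hxn, hfx⟩ := hx
      by_cases h1 : gb n H x = true
      · rw [if_pos h1] at hfx
        simp [hfx]
      · by_cases h2 : 0 < x ∧ gb n H (x-1) = true
        · rw [if_neg h1, if_pos h2] at hfx
          simp only [mem_insert, mem_singleton]
          omega
        · rw [if_neg h1, if_neg h2] at hfx
          simp only [mem_insert, mem_singleton]
          omega
    · refine le_trans (card_insert_le _ _) (Nat.succ_le_succ ?_)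
      refine le_trans (card_insert_le _ _) (Nat.succ_le_succ ?_)
      simp

def fib (n : ℕ) (G : Finset ℕ) : Finset (Finset ℕ) :=
  G.powerset.filter (fun H => gset n H = G)

def FG (n : ℕ) (G : Finset ℕ) : Finset ℕ :=
  if h : (fib n G).Nonempty then (fib n G).inf' h id else ∅

lemma indep_subset (hG : Indep G) (h : H ⊆ G) : Indep H :=
  fun i hi hi1 => hG i (h hi) (h hi1)

lemma mem_fib : H ∈ fib n G ↔ H ⊆ G ∧ gset n H = G := by
  simp [fib]

lemma gb_eq_of_gset_eq (h : gset n H1 = gset n H2) : ∀ i, gb n H1 i = gb n H2 i := by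
  intro i
  by_cases hin : i < n
  · by_cases b1 : gb n H1 i = true
    · have : i ∈ gset n H2 := h ▸ mem_gset.mpr ⟨hin, b1⟩
      rw [b1, (mem_gset.mp this).2]
    · by_cases b2 : gb n H2 i = true
      · exact absurd (mem_gset.mp (h.symm ▸ mem_gset.mpr ⟨hin, b2⟩)).2 b1
      · rw [Bool.eq_false_iff.mpr b1, Bool.eq_false_iff.mpr b2]
  · rw [gb_false_of_le (Nat.le_of_not_lt hin), gb_false_of_le (Nat.le_of_not_lt hin)]

lemma fib_inter (hG : Indep G) (h1 : H1 ∈ fib n G) (h2 : H2 ∈ fib n G) :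
    H1 ∩ H2 ∈ fib n G := by
  rcases mem_fib.mp h1 with ⟨s1, g1⟩
  rcases mem_fib.mp h2 with ⟨s2, g2⟩
  have heq := gb_eq_of_gset_eq (g1.trans g2.symm)
  have hkey := gb_inter (indep_subset hG s1) (indep_subset hG s2) heq
  refine mem_fib.mpr ⟨inter_subset_left.trans s1, ?_⟩
  rw [← g1]
  ext i
  simp [mem_gset, hkey i]

lemma FG_mem (hG : Indep G) (hfix : gset n G = G) : FG n G ∈ fib n G := by
  have hne : (fib n G).Nonempty := ⟨G, mem_fib.mpr ⟨subset_rfl, hfix⟩⟩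
  rw [FG, dif_pos hne]
  exact Finset.inf'_mem (↑(fib n G) : Set (Finset ℕ))
    (fun x hx y hy => fib_inter hG hx hy) _ hne id (fun i hi => hi)

lemma FG_subset (h : H ∈ fib n G) : FG n G ⊆ H := by
  have hne : (fib n G).Nonempty := ⟨H, h⟩
  rw [FG, dif_pos hne]
  exact Finset.inf'_le id h

lemma gset_consistent (hH : Indep H) (hsub : H ⊆ H') (hsub' : H' ⊆ gset n H) :
    gset n H' = gset n H := by
  ext i
  simp [mem_gset, gb_consistent hH hsub hsub' i]

lemma gset_fix (hH : Indep H) (hHr : H ⊆ range n) : gset n (gset n H) = gset n H :=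
  gset_consistent hH (subset_gset hHr) subset_rfl

/-- key uniqueness: if `G` is a greedy fixed point and `F_G ⊆ H ⊆ G`, then `g(H) = G`. -/
lemma gset_eq_of_between (hG : Indep G) (hfix : gset n G = G)
    (hFH : FG n G ⊆ H) (hHG : H ⊆ G) : gset n H = G := by
  rcases mem_fib.mp (FG_mem hG hfix) with ⟨hFsub, hFg⟩
  have hHg : H ⊆ gset n (FG n G) := by rw [hFg]; exact hHG
  have h := gset_consistent (indep_subset hG hFsub) hFH hHg
  rw [h, hFg]

end SD

noncomputable section FinWorld
open MvPolynomial SD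

variable {K : Type*} [Field K] {n : ℕ}

def toFinZ (n : ℕ) (G : Finset ℕ) : Finset (Fin n) :=
  Finset.univ.filter (fun i => (i : ℕ) ∈ G)

noncomputable def uof (n : ℕ) (F : Finset ℕ) : Fin n →₀ ℕ :=
  Finsupp.equivFunOnFinite.symm (fun i => if (i : ℕ) ∈ F then 1 else 0)

def Hof {n : ℕ} (a : Fin n →₀ ℕ) : Finset ℕ := a.support.map Fin.valEmbedding

lemma uof_apply {F : Finset ℕ} (i : Fin n) :
    uof n F i = if (i : ℕ) ∈ F then 1 else 0 := rfl

lemma coe_mem_Hof {a : Fin n →₀ ℕ} {j : Fin n} : (j : ℕ) ∈ Hof a ↔ a j ≠ 0 := by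
  simp [Hof, Fin.valEmbedding, Fin.val_injective.eq_iff]

lemma Hof_subset_range {a : Fin n →₀ ℕ} : Hof a ⊆ Finset.range n := by
  intro i hi
  simp only [Hof, Finset.mem_map, Fin.valEmbedding_apply] at hi
  rcases hi with ⟨j, -, rfl⟩
  simpa using j.isLt

lemma mem_Hof {a : Fin n →₀ ℕ} {i : ℕ} (h : i ∈ Hof a) :
    ∃ j : Fin n, (j : ℕ) = i ∧ a j ≠ 0 := by
  simp only [Hof, Finset.mem_map, Fin.valEmbedding_apply] at h
  rcases h with ⟨j, hj, rfl⟩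
  exact ⟨j, rfl, by simpa using hj⟩

lemma X_mul_X {i j : Fin n} :
    (X i * X j : MvPolynomial (Fin n) K) =
      monomial (Finsupp.single i 1 + Finsupp.single j 1) 1 := by
  rw [MvPolynomial.X, MvPolynomial.X, monomial_mul, one_mul]

lemma pathIdeal_eq :
    pathIdeal K n n = Ideal.span ((fun s => monomial s (1 : K)) ''
      {s | ∃ i j : Fin n, (j : ℕ) = (i : ℕ) + 1 ∧ (i : ℕ) + 2 ≤ n ∧
        s = Finsupp.single i 1 + Finsupp.single j 1}) := by
  unfold pathIdeal
  congr 1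
  ext p
  constructor
  · rintro ⟨i, j, hj, hi, rfl⟩
    exact ⟨_, ⟨i, j, hj, hi, rfl⟩, X_mul_X.symm⟩
  · rintro ⟨s, ⟨i, j, hj, hi, rfl⟩, rfl⟩
    exact ⟨i, j, hj, hi, X_mul_X.symm⟩

lemma monomial_notMem_iff {a : Fin n →₀ ℕ} :
    monomial a (1 : K) ∉ pathIdeal K n n ↔ Indep (Hof a) := by
  rw [pathIdeal_eq, mem_ideal_span_monomial_image]
  classical
  rw [support_monomial, if_neg (one_ne_zero : (1:K) ≠ 0)]
  simp only [Finset.mem_singleton, forall_eq, Set.mem_setOf_eq, not_exists]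
  constructor
  · -- ¬(∃ s ∈ T, s ≤ a) → Indep
    intro h
    by_contra hind
    unfold Indep at hind
    push_neg at hind
    rcases hind with ⟨m, hm, hm1⟩
    rcases mem_Hof hm with ⟨i, hi, hai⟩
    rcases mem_Hof hm1 with ⟨j, hj, haj⟩
    refine h (Finsupp.single i 1 + Finsupp.single j 1) ?_
    refine ⟨⟨i, j, by omega, by have := j.isLt; omega, rfl⟩, ?_⟩
    rw [Finsupp.le_def]
    intro k
    have hij : i ≠ j := by intro e; rw [e] at hi; omega
    by_cases hk : k = i
    · subst hk
      simp [Finsupp.single_apply, hij, Ne.symm hij, Nat.one_le_iff_ne_zero, hai]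
    · by_cases hk' : k = j
      · subst hk'
        simp [Finsupp.single_apply, hij, Ne.symm hij, hk, Nat.one_le_iff_ne_zero, haj]
      · simp [Finsupp.single_apply, Ne.symm hk, Ne.symm hk']
  · -- Indep → ¬∃
    intro hind s
    rintro ⟨⟨i, j, hj, hi2, rfl⟩, hle⟩
    rw [Finsupp.le_def] at hle
    have hij : i ≠ j := fun e => by rw [e] at hj; omega
    have hai : a i ≠ 0 := by
      have := hle i
      simp [Finsupp.single_apply, hij] at this
      omega
    have haj : a j ≠ 0 := by
      have := hle j
      simp [Finsupp.single_apply, Ne.symm hij] at this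
      omega
    exact hind (i : ℕ) (coe_mem_Hof.mpr hai) (hj ▸ coe_mem_Hof.mpr haj)

open Classical in
noncomputable def Dset (K : Type*) [Field K] (n : ℕ) :
    Finset ((Fin n →₀ ℕ) × Finset (Fin n)) :=
  (((Finset.range n).powerset.filter (fun G => Indep G ∧ gset n G = G))).image
    (fun G => (uof n (FG n G), toFinZ n G))

lemma toFinZ_card {G : Finset ℕ} (hG : G ⊆ Finset.range n) :
    (toFinZ n G).card = G.card := by
  refine Finset.card_bij (fun i _ => (i : ℕ)) ?_ ?_ ?_
  · intro i hi
    simpa [toFinZ] using (Finset.mem_filter.mp hi).2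
  · intro i _ j _ h
    exact Fin.val_injective h
  · intro j hj
    exact ⟨⟨j, Finset.mem_range.mp (hG hj)⟩, by simp [toFinZ, hj], rfl⟩

lemma between_of_piece {a v : Fin n →₀ ℕ} {G : Finset ℕ} (hGr : G ⊆ Finset.range n)
    (hFG : FG n G ⊆ G) (hv : v.support ⊆ toFinZ n G) (ha : a = uof n (FG n G) + v) :
    FG n G ⊆ Hof a ∧ Hof a ⊆ G := by
  constructor
  · intro i hi
    have hin : i < n := Finset.mem_range.mp (hGr (hFG hi))
    have : ((⟨i, hin⟩ : Fin n) : ℕ) ∈ Hof a := by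
      rw [coe_mem_Hof, ha, Finsupp.add_apply, uof_apply]
      simp only [hi, if_true]
      omega
    exact this
  · intro i hi
    rcases mem_Hof hi with ⟨j, rfl, hj⟩
    rw [ha, Finsupp.add_apply] at hj
    by_cases hmem : (j : ℕ) ∈ FG n G
    · exact hFG hmem
    · have : v j ≠ 0 := by
        rw [uof_apply, if_neg hmem] at hj
        simpa using hj
      have := hv (Finsupp.mem_support_iff.mpr this)
      simpa [toFinZ] using this

lemma mem_Dset {p : (Fin n →₀ ℕ) × Finset (Fin n)} :
    p ∈ Dset K n ↔ ∃ G, (G ⊆ Finset.range n ∧ Indep G ∧ gset n G = G) ∧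
      p = (uof n (FG n G), toFinZ n G) := by
  simp [Dset, Finset.mem_image, Finset.mem_filter, Finset.mem_powerset, and_assoc, eq_comm]

lemma Dset_isStanley : IsStanleyDecomp (pathIdeal K n n) (Dset K n) := by
  constructor
  · rintro p hp v hv
    rcases mem_Dset.mp hp with ⟨G, ⟨hGr, hGind, hGfix⟩, rfl⟩
    rw [monomial_notMem_iff]
    have hFG : FG n G ⊆ G := (mem_fib.mp (FG_mem hGind hGfix)).1
    exact indep_subset hGind (between_of_piece hGr hFG hv rfl).2
  · intro a ha
    rw [monomial_notMem_iff] at ha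
    have hHr : Hof a ⊆ Finset.range n := Hof_subset_range
    set H := Hof a with hHdef
    set G := gset n H with hGdef
    have hHG : H ⊆ G := subset_gset hHr
    have hGind : Indep G := gset_indep ha
    have hGfix : gset n G = G := gset_fix ha hHr
    have hGr : G ⊆ Finset.range n := gset_subset_range
    have hFG : FG n G ⊆ G := (mem_fib.mp (FG_mem hGind hGfix)).1
    have hFH : FG n G ⊆ H := FG_subset (mem_fib.mpr ⟨hHG, rfl⟩)
    have hule : ∀ j : Fin n, uof n (FG n G) j ≤ a j := by
      intro j
      rw [uof_apply]
      split
      · next hmem =>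
          have : a j ≠ 0 := coe_mem_Hof.mp (hFH hmem)
          omega
      · exact Nat.zero_le _
    refine ⟨(uof n (FG n G), toFinZ n G), ⟨mem_Dset.mpr ⟨G, ⟨hGr, hGind, hGfix⟩, rfl⟩,
      a - uof n (FG n G), ?_, ?_⟩, ?_⟩
    · intro j hj
      have hj' : a j ≠ 0 := by
        have := Finsupp.mem_support_iff.mp hj
        rw [Finsupp.tsub_apply] at this
        omega
      have : (j : ℕ) ∈ G := hHG (coe_mem_Hof.mpr hj')
      simpa [toFinZ] using this
    · ext j
      change a j = uof n (FG n G) j + (a - uof n (FG n G)) j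
      rw [Finsupp.tsub_apply]
      have := hule j
      omega
    · rintro q ⟨hq, v', hv', hav'⟩
      rcases mem_Dset.mp hq with ⟨G', ⟨hG'r, hG'ind, hG'fix⟩, rfl⟩
      have hFG' : FG n G' ⊆ G' := (mem_fib.mp (FG_mem hG'ind hG'fix)).1
      obtain ⟨h1, h2⟩ := between_of_piece hG'r hFG' hv' hav'
      have hGG : G' = G := by
        rw [hGdef, ← gset_eq_of_between hG'ind hG'fix h1 h2]
      rw [hGG]

theorem main_sdepth {K : Type*} [Field K] (n : ℕ) (hn : 2 ≤ n) :
    ⌈(n : ℚ) / 3⌉ ≤ (sdepth (pathIdeal K n n) : ℤ) := by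
  have hdec := Dset_isStanley (K := K) (n := n)
  have hcard : ∀ p ∈ Dset K n, (n+2)/3 ≤ p.2.card := by
    intro p hp
    rcases mem_Dset.mp hp with ⟨G, ⟨hGr, hGind, hGfix⟩, rfl⟩
    have h3 : n ≤ 3 * G.card := by
      have := card_gset (n := n) (H := G) hGr
      rwa [hGfix] at this
    simp only [toFinZ_card hGr]
    omega
  have hmem : (n+2)/3 ∈ {s : ℕ | ∃ D, IsStanleyDecomp (pathIdeal K n n) D ∧
      ∀ p ∈ D, s ≤ p.2.card} := ⟨Dset K n, hdec, hcard⟩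
  have hbdd : BddAbove {s : ℕ | ∃ D, IsStanleyDecomp (pathIdeal K n n) D ∧
      ∀ p ∈ D, s ≤ p.2.card} := by
    refine ⟨n, fun s hs => ?_⟩
    rcases hs with ⟨D, hD, hle⟩
    have h1 : monomial (0 : Fin n →₀ ℕ) (1 : K) ∉ pathIdeal K n n := by
      rw [monomial_notMem_iff]
      intro i hi
      simp [Hof] at hi
    obtain ⟨p, ⟨hp, -⟩, -⟩ := hD.2 0 h1
    exact (hle p hp).trans ((Finset.card_le_univ _).trans_eq (by simp))
  have hle : (n+2)/3 ≤ sdepth (pathIdeal K n n) := le_csSup hbdd hmem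
  have h2 : ⌈(n : ℚ) / 3⌉ ≤ (((n+2)/3 : ℕ) : ℤ) := by
    rw [Int.ceil_le]
    rw [div_le_iff₀ (by norm_num : (0:ℚ) < 3)]
    have h3 : (n:ℚ) ≤ (((n+2)/3 : ℕ) : ℚ) * 3 := by
      have : n ≤ ((n+2)/3) * 3 := by omega
      exact_mod_cast this
    exact_mod_cast h3
  exact h2.trans (by exact_mod_cast hle)

end FinWorld

/-- For `n ≥ 2` and `I = I(P_n)` the edge ideal of the path `P_n` in
`S = K[x_1, …, x_n]`, one has `sdepth (S/I) ≥ ⌈n/3⌉`. -/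
theorem sdepth_pathIdeal_ge {K : Type*} [Field K] (n : ℕ) (hn : 2 ≤ n) :
    ⌈(n : ℚ) / 3⌉ ≤ (sdepth (pathIdeal K n n) : ℤ) := by
  exact main_sdepth n hn
end

section
/- Let n ≥ 2, K a field, S = K[x_1,…,x_n], and I = I(P_n) the edge ideal of the path P_n. Then sdepth(S/I) ≤ ⌈n/3⌉. -/
open MvPolynomial

namespace SdepthAux

set_option maxHeartbeats 2000000

def Good (n m : ℕ) (a : Fin n →₀ ℕ) : Prop :=
  ∀ i j : Fin n, (j : ℕ) = (i : ℕ) + 1 → (i : ℕ) + 2 ≤ m → a i = 0 ∨ a j = 0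

lemma key (m : ℕ) : ∀ (n s : ℕ) (Kl : Finset (Fin n)),
    m ≤ n → (∀ i ∈ Kl, m ≤ (i : ℕ)) →
    ∀ D : Finset ((Fin n →₀ ℕ) × Finset (Fin n)),
    (∀ p ∈ D, ∀ v : Fin n →₀ ℕ, v.support ⊆ p.2 →
        Good n m (p.1 + v) ∧ ∀ i ∈ Kl, (p.1 + v) i = 0) →
    (∀ a : Fin n →₀ ℕ, Good n m a → (∀ i ∈ Kl, a i = 0) →
        ∃! p : (Fin n →₀ ℕ) × Finset (Fin n), p ∈ D ∧
          ∃ v : Fin n →₀ ℕ, v.support ⊆ p.2 ∧ a = p.1 + v) →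
    (∀ p ∈ D, s ≤ p.2.card) →
    3 * s + 3 * m + 3 * Kl.card ≤ m + 2 + 3 * n := by
  induction m using Nat.strong_induction_on with
  | _ m IH =>
  intro n s Kl hm hK D hsub hcov hs
  classical
  have fne : ∀ (i j : Fin n), (i : ℕ) ≠ (j : ℕ) → i ≠ j :=
    fun i j h hh => h (by rw [hh])
  -- Kl.card + m ≤ n
  have hKn : Kl.card + m ≤ n := by
    have hdisj : Disjoint Kl (Finset.univ.map (Fin.castLEOrderEmb hm).toEmbedding) := by
      rw [Finset.disjoint_left]
      intro i hi hmem
      obtain ⟨j, -, hj⟩ := Finset.mem_map.mp hmem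
      have h1 := hK i hi
      have h2 : (i : ℕ) < m := by rw [← hj]; exact j.isLt
      omega
    calc Kl.card + m
        = (Kl ∪ Finset.univ.map (Fin.castLEOrderEmb hm).toEmbedding).card := by
          rw [Finset.card_union_of_disjoint hdisj, Finset.card_map, Finset.card_univ,
            Fintype.card_fin]
      _ ≤ (Finset.univ : Finset (Fin n)).card := Finset.card_le_card (Finset.subset_univ _)
      _ = n := by rw [Finset.card_univ, Fintype.card_fin]
  -- Z-sets are disjoint from Kl
  have hZK : ∀ p ∈ D, Disjoint p.2 Kl := by
    intro p hp
    rw [Finset.disjoint_left]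
    intro i hiZ hiK
    have h := (hsub p hp (Finsupp.single i 1)
      (Finsupp.support_single_subset.trans (Finset.singleton_subset_iff.mpr hiZ))).2 i hiK
    rw [Finsupp.add_apply, Finsupp.single_eq_same] at h
    omega
  have hcard : ∀ p ∈ D, p.2.card + Kl.card ≤ n := by
    intro p hp
    calc p.2.card + Kl.card = (p.2 ∪ Kl).card :=
          (Finset.card_union_of_disjoint (hZK p hp)).symm
      _ ≤ (Finset.univ : Finset (Fin n)).card := Finset.card_le_card (Finset.subset_univ _)
      _ = n := by rw [Finset.card_univ, Fintype.card_fin]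
  -- a piece exists: the one containing 0
  obtain ⟨p₀, ⟨hp₀D, -⟩, -⟩ := hcov 0 (fun i j _ _ => Or.inl (Finsupp.zero_apply))
    (fun i _ => Finsupp.zero_apply)
  rcases lt_or_ge m 3 with hm3 | hm3
  · -- base cases m = 0, 1, 2
    have hc := hcard p₀ hp₀D
    have hsp := hs p₀ hp₀D
    interval_cases m
    · omega
    · omega
    · -- m = 2
      set i0 : Fin n := ⟨0, by omega⟩ with hi0
      set i1 : Fin n := ⟨1, by omega⟩ with hi1
      have hv0 : (i0 : ℕ) = 0 := rfl
      have hv1 : (i1 : ℕ) = 1 := rfl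
      have hne : i0 ≠ i1 := fne _ _ (by omega)
      have hmiss : i0 ∉ p₀.2 ∨ i1 ∉ p₀.2 := by
        by_contra h
        push_neg at h
        have hsup : (Finsupp.single i0 1 + Finsupp.single i1 1).support ⊆ p₀.2 :=
          Finsupp.support_add.trans (Finset.union_subset
            (Finsupp.support_single_subset.trans (Finset.singleton_subset_iff.mpr h.1))
            (Finsupp.support_single_subset.trans (Finset.singleton_subset_iff.mpr h.2)))
        rcases (hsub p₀ hp₀D _ hsup).1 i0 i1 (by omega) (by omega) with hh | hh
        · rw [Finsupp.add_apply, Finsupp.add_apply, Finsupp.single_eq_same,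
            Finsupp.single_eq_of_ne' (Ne.symm hne)] at hh
          omega
        · rw [Finsupp.add_apply, Finsupp.add_apply, Finsupp.single_eq_same,
            Finsupp.single_eq_of_ne' hne] at hh
          omega
      obtain ⟨j, hjZ, hjv⟩ : ∃ j : Fin n, j ∉ p₀.2 ∧ (j : ℕ) ≤ 1 := by
        rcases hmiss with h | h
        · exact ⟨i0, h, by omega⟩
        · exact ⟨i1, h, by omega⟩
      have hjK : j ∉ Kl := fun hh => by have := hK _ hh; omega
      have h1 : (insert j (p₀.2 ∪ Kl)).card = p₀.2.card + Kl.card + 1 := by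
        rw [Finset.card_insert_of_notMem (by
          rw [Finset.mem_union]; push_neg; exact ⟨hjZ, hjK⟩),
          Finset.card_union_of_disjoint (hZK p₀ hp₀D)]
      have h2 : (insert j (p₀.2 ∪ Kl)).card ≤ n := by
        calc (insert j (p₀.2 ∪ Kl)).card
            ≤ (Finset.univ : Finset (Fin n)).card :=
              Finset.card_le_card (Finset.subset_univ _)
          _ = n := by rw [Finset.card_univ, Fintype.card_fin]
      omega
  · -- inductive step: m = k + 3
    obtain ⟨k, rfl⟩ : ∃ k, m = k + 3 := ⟨m - 3, by omega⟩
    rcases Nat.eq_zero_or_pos s with rfl | hs0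
    · omega
    obtain ⟨t, rfl⟩ : ∃ t, s = t + 1 := ⟨s - 1, by omega⟩
    have hkn : k + 3 ≤ n := hm
    set cm3 : Fin n := ⟨k, by omega⟩ with hcm3
    set c : Fin n := ⟨k + 1, by omega⟩ with hc
    set cm1 : Fin n := ⟨k + 2, by omega⟩ with hcm1
    have hv3 : (cm3 : ℕ) = k := rfl
    have hvc : (c : ℕ) = k + 1 := rfl
    have hv1 : (cm1 : ℕ) = k + 2 := rfl
    set Kl' : Finset (Fin n) := insert cm3 (insert c (insert cm1 Kl)) with hKl'
    set F : (Fin n →₀ ℕ) × Finset (Fin n) → (Fin n →₀ ℕ) × Finset (Fin n) :=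
      fun p => (p.1.erase c, p.2.erase c) with hF
    set D' : Finset ((Fin n →₀ ℕ) × Finset (Fin n)) :=
      (D.filter (fun p => c ∈ p.2)).image F with hD'
    have hK' : ∀ i ∈ Kl', k ≤ (i : ℕ) := by
      intro i hi
      rcases Finset.mem_insert.mp hi with rfl | hi
      · omega
      rcases Finset.mem_insert.mp hi with rfl | hi
      · omega
      rcases Finset.mem_insert.mp hi with rfl | hi
      · omega
      · have := hK i hi; omega
    have hKl'card : Kl'.card = Kl.card + 3 := by
      have e1 : cm1 ∉ Kl := fun h => by have := hK _ h; omega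
      have e2 : c ∉ insert cm1 Kl := by
        intro h
        rcases Finset.mem_insert.mp h with h | h
        · have := congrArg Fin.val h; omega
        · have := hK _ h; omega
      have e3 : cm3 ∉ insert c (insert cm1 Kl) := by
        intro h
        rcases Finset.mem_insert.mp h with h | h
        · have := congrArg Fin.val h; omega
        rcases Finset.mem_insert.mp h with h | h
        · have := congrArg Fin.val h; omega
        · have := hK _ h; omega
      rw [hKl', Finset.card_insert_of_notMem e3, Finset.card_insert_of_notMem e2,
        Finset.card_insert_of_notMem e1]
    -- hsub'
    have hsub' : ∀ p' ∈ D', ∀ v : Fin n →₀ ℕ, v.support ⊆ p'.2 →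
        Good n k (p'.1 + v) ∧ ∀ i ∈ Kl', (p'.1 + v) i = 0 := by
      intro p' hp' v hv
      obtain ⟨p, hpf, rfl⟩ := Finset.mem_image.mp hp'
      obtain ⟨hpD, hcZ⟩ := Finset.mem_filter.mp hpf
      have hvc0 : v c = 0 := Finsupp.notMem_support_iff.mp
        (fun h => Finset.notMem_erase c p.2 (hv h))
      set w : Fin n →₀ ℕ := v + Finsupp.single c 1 with hw
      have hsupw : w.support ⊆ p.2 :=
        Finsupp.support_add.trans (Finset.union_subset
          (hv.trans (Finset.erase_subset _ _))
          (Finsupp.support_single_subset.trans (Finset.singleton_subset_iff.mpr hcZ)))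
      have hA := hsub p hpD w hsupw
      have hwapp : ∀ i : Fin n, i ≠ c → w i = v i := by
        intro i hi
        rw [hw, Finsupp.add_apply, Finsupp.single_eq_of_ne' (Ne.symm hi), Nat.add_zero]
      have hB := hsub p hpD v (hv.trans (Finset.erase_subset _ _))
      have heq : ∀ i : Fin n, i ≠ c → ((F p).1 + v) i = (p.1 + w) i := by
        intro i hi
        show (p.1.erase c + v) i = _
        rw [Finsupp.add_apply, Finsupp.add_apply, Finsupp.erase_ne hi, hwapp i hi]
      have heqB : ∀ i : Fin n, i ≠ c → ((F p).1 + v) i = (p.1 + v) i := by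
        intro i hi
        show (p.1.erase c + v) i = _
        rw [Finsupp.add_apply, Finsupp.add_apply, Finsupp.erase_ne hi]
      have hAc : (p.1 + w) c ≠ 0 := by
        rw [Finsupp.add_apply, hw, Finsupp.add_apply, Finsupp.single_eq_same]
        omega
      constructor
      · intro i j hj hij
        have hic : i ≠ c := fne _ _ (by omega)
        have hjc : j ≠ c := fne _ _ (by omega)
        rcases hA.1 i j hj (by omega) with h | h
        · left; rw [heq i hic]; exact h
        · right; rw [heq j hjc]; exact h
      · intro i hi
        rcases Finset.mem_insert.mp hi with rfl | hi
        · rcases hA.1 cm3 c (by omega) (by omega) with h | h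
          · rw [heq cm3 (fne _ _ (by omega))]; exact h
          · exact absurd h hAc
        rcases Finset.mem_insert.mp hi with rfl | hi
        · show (p.1.erase c + v) c = 0
          rw [Finsupp.add_apply, Finsupp.erase_same, hvc0]
        rcases Finset.mem_insert.mp hi with rfl | hi
        · rcases hA.1 c cm1 (by omega) (by omega) with h | h
          · exact absurd h hAc
          · rw [heq cm1 (fne _ _ (by omega))]; exact h
        · have hic : i ≠ c := fne _ _ (by have := hK i hi; omega)
          rw [heqB i hic]
          exact hB.2 i hi
    -- hcov'
    have hcov' : ∀ b : Fin n →₀ ℕ, Good n k b → (∀ i ∈ Kl', b i = 0) →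
        ∃! p : (Fin n →₀ ℕ) × Finset (Fin n), p ∈ D' ∧
          ∃ v : Fin n →₀ ℕ, v.support ⊆ p.2 ∧ b = p.1 + v := by
      intro b hbG hbz
      have hb3 : b cm3 = 0 := hbz cm3 (Finset.mem_insert_self _ _)
      have hbc : b c = 0 := hbz c (Finset.mem_insert_of_mem (Finset.mem_insert_self _ _))
      have hb1 : b cm1 = 0 := hbz cm1
        (Finset.mem_insert_of_mem (Finset.mem_insert_of_mem (Finset.mem_insert_self _ _)))
      have hbK : ∀ i ∈ Kl, b i = 0 := fun i hi => hbz i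
        (Finset.mem_insert_of_mem (Finset.mem_insert_of_mem (Finset.mem_insert_of_mem hi)))
      set N : ℕ := (D.sup fun p => p.1 c) + 1 with hNdef
      have hN : ∀ p ∈ D, p.1 c < N := fun p hp =>
        Nat.lt_succ_of_le (Finset.le_sup (f := fun p => p.1 c) hp)
      obtain ⟨a, ha⟩ : ∃ a : Fin n →₀ ℕ, a = b + Finsupp.single c N := ⟨_, rfl⟩
      have hval : ∀ x : Fin n, x ≠ c → a x = b x := by
        intro x hx
        rw [ha, Finsupp.add_apply, Finsupp.single_eq_of_ne' (Ne.symm hx), Nat.add_zero]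
      have hac : a c = N := by
        rw [ha, Finsupp.add_apply, hbc, Finsupp.single_eq_same, Nat.zero_add]
      have haG : Good n (k + 3) a := by
        intro i j hj hij
        rcases show (j : ℕ) = k ∨ (i : ℕ) = k ∨ (i : ℕ) = k + 1 ∨ (i : ℕ) + 2 ≤ k
            by omega with h | h | h | h
        · right
          have hj3 : j = cm3 := Fin.ext h
          rw [hval j (fne _ _ (by omega)), hj3]; exact hb3
        · left
          have hi3 : i = cm3 := Fin.ext h
          rw [hval i (fne _ _ (by omega)), hi3]; exact hb3
        · right
          have hj1 : j = cm1 := Fin.ext (by omega)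
          rw [hval j (fne _ _ (by omega)), hj1]; exact hb1
        · rcases hbG i j hj h with hh | hh
          · left; rw [hval i (fne _ _ (by omega))]; exact hh
          · right; rw [hval j (fne _ _ (by omega))]; exact hh
      have haz : ∀ i ∈ Kl, a i = 0 := by
        intro i hi
        rw [hval i (fne _ _ (by have := hK i hi; omega))]
        exact hbK i hi
      obtain ⟨p, ⟨hpD, v, hvZ, hav⟩, hpu⟩ := hcov a haG haz
      have hcp : c ∈ p.2 := by
        have h2 : a c = p.1 c + v c := by rw [hav, Finsupp.add_apply]
        have h3 := hN p hpD
        exact hvZ (Finsupp.mem_support_iff.mpr (by omega))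
      refine ⟨F p, ⟨Finset.mem_image_of_mem F (Finset.mem_filter.mpr ⟨hpD, hcp⟩),
        v.erase c, ?_, ?_⟩, ?_⟩
      · show (v.erase c).support ⊆ p.2.erase c
        rw [Finsupp.support_erase]
        exact Finset.erase_subset_erase c hvZ
      · show b = p.1.erase c + v.erase c
        ext i
        rcases eq_or_ne i c with rfl | hic
        · rw [Finsupp.add_apply, Finsupp.erase_same, Finsupp.erase_same, hbc]
          rfl
        · rw [Finsupp.add_apply, Finsupp.erase_ne hic, Finsupp.erase_ne hic]
          have h2 : a i = p.1 i + v i := by rw [hav, Finsupp.add_apply]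
          have h3 := hval i hic
          omega
      · rintro q' ⟨hq'D', w, hwZ, hbw⟩
        obtain ⟨q, hqf, rfl⟩ := Finset.mem_image.mp hq'D'
        obtain ⟨hqD, hqc⟩ := Finset.mem_filter.mp hqf
        have hq : q = p := by
          apply hpu
          have hwc : w c = 0 := Finsupp.notMem_support_iff.mp
            (fun h => Finset.notMem_erase c q.2 (hwZ h))
          refine ⟨hqD, w + Finsupp.single c (N - q.1 c), ?_, ?_⟩
          · exact Finsupp.support_add.trans (Finset.union_subset
              (hwZ.trans (Finset.erase_subset _ _))
              (Finsupp.support_single_subset.trans (Finset.singleton_subset_iff.mpr hqc)))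
          · ext i
            rcases eq_or_ne i c with rfl | hic
            · have h3 := hN q hqD
              simp only [Finsupp.add_apply, hwc, Finsupp.single_eq_same, hac]
              omega
            · have h3 := hval i hic
              have h4 : b i = q.1 i + w i := by
                rw [hbw]
                show (q.1.erase c + w) i = _
                rw [Finsupp.add_apply, Finsupp.erase_ne hic]
              simp only [Finsupp.add_apply, Finsupp.single_eq_of_ne' (Ne.symm hic)]
              omega
        rw [hq]
    -- hs'
    have hs' : ∀ p' ∈ D', t ≤ p'.2.card := by
      intro p' hp'
      obtain ⟨p, hpf, rfl⟩ := Finset.mem_image.mp hp'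
      obtain ⟨hpD, hcZ⟩ := Finset.mem_filter.mp hpf
      have h1 := hs p hpD
      show t ≤ (p.2.erase c).card
      rw [Finset.card_erase_of_mem hcZ]
      omega
    have HIH := IH k (by omega) n t Kl' (by omega) hK' D' hsub' hcov' hs'
    omega

lemma pathIdeal_eq (K : Type*) [Field K] (n m : ℕ) :
    pathIdeal K n m = Ideal.span ((fun s => monomial s (1 : K)) ''
      {d | ∃ i j : Fin n, (j : ℕ) = (i : ℕ) + 1 ∧ (i : ℕ) + 2 ≤ m ∧
        d = Finsupp.single i 1 + Finsupp.single j 1}) := by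
  unfold pathIdeal
  congr 1
  ext p
  constructor
  · rintro ⟨i, j, h1, h2, rfl⟩
    exact ⟨Finsupp.single i 1 + Finsupp.single j 1, ⟨i, j, h1, h2, rfl⟩,
      by rw [X, X, monomial_mul, one_mul]⟩
  · rintro ⟨d, ⟨i, j, h1, h2, rfl⟩, rfl⟩
    exact ⟨i, j, h1, h2, by rw [X, X, monomial_mul, one_mul]⟩

lemma monomial_mem_iff {K : Type*} [Field K] {n m : ℕ} (a : Fin n →₀ ℕ) :
    monomial a (1 : K) ∈ pathIdeal K n m ↔ ¬ Good n m a := by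
  rw [pathIdeal_eq, mem_ideal_span_monomial_image]
  classical
  rw [support_monomial, if_neg one_ne_zero]
  simp only [Finset.mem_singleton, forall_eq]
  constructor
  · rintro ⟨d, ⟨i, j, h1, h2, rfl⟩, hle⟩ hg
    have hij : i ≠ j := fun h => by simp [h] at h1
    have hi := Finsupp.le_def.mp hle i
    have hj := Finsupp.le_def.mp hle j
    simp only [Finsupp.add_apply, Finsupp.single_eq_same,
      Finsupp.single_eq_of_ne' hij, Finsupp.single_eq_of_ne' (Ne.symm hij)] at hi hj
    rcases hg i j h1 h2 with h | h <;> omega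
  · intro h
    rw [Good] at h
    push_neg at h
    obtain ⟨i, j, h1, h2, hi, hj⟩ := h
    have hij : i ≠ j := fun h => by simp [h] at h1
    refine ⟨_, ⟨i, j, h1, h2, rfl⟩, Finsupp.le_def.mpr fun k => ?_⟩
    rw [Finsupp.add_apply]
    rcases eq_or_ne k i with rfl | hki
    · rw [Finsupp.single_eq_same, Finsupp.single_eq_of_ne' (Ne.symm hij)]; omega
    rcases eq_or_ne k j with rfl | hkj
    · rw [Finsupp.single_eq_same, Finsupp.single_eq_of_ne' hij]; omega
    · rw [Finsupp.single_eq_of_ne' (Ne.symm hki), Finsupp.single_eq_of_ne' (Ne.symm hkj)]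
      exact Nat.zero_le _

end SdepthAux

/-- For `n ≥ 2` and `I = I(P_n)` the edge ideal of the path `P_n` in
`S = K[x_1, …, x_n]`, one has `sdepth (S/I) ≤ ⌈n/3⌉`. -/
theorem sdepth_pathIdeal_le {K : Type*} [Field K] (n : ℕ) (hn : 2 ≤ n) :
    (sdepth (pathIdeal K n n) : ℤ) ≤ ⌈(n : ℚ) / 3⌉ := by
  have hB : ∀ s ∈ {s : ℕ | ∃ D, IsStanleyDecomp (pathIdeal K n n) D ∧ ∀ p ∈ D, s ≤ p.2.card},
      s ≤ (n + 2) / 3 := by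
    rintro s ⟨D, ⟨h1, h2⟩, hs⟩
    have hkey := SdepthAux.key n n s ∅ le_rfl (by simp) D ?_ ?_ hs
    · rw [Nat.le_div_iff_mul_le (by norm_num : 0 < 3)]
      simp only [Finset.card_empty] at hkey
      omega
    · intro p hp v hv
      refine ⟨?_, by simp⟩
      have h := h1 p hp v hv
      rw [SdepthAux.monomial_mem_iff] at h
      exact not_not.mp h
    · intro a ha _
      exact h2 a (fun hmem => (SdepthAux.monomial_mem_iff a).mp hmem ha)
  have hsd : sdepth (pathIdeal K n n) ≤ (n + 2) / 3 := csSup_le' hB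
  have hx : (n + 2) / 3 * 3 ≤ n + 2 := Nat.div_mul_le_self (n + 2) 3
  have hlt : ((((n + 2) / 3 : ℕ) : ℤ)) - 1 < ⌈(n : ℚ) / 3⌉ := by
    apply Int.lt_ceil.mpr
    rw [lt_div_iff₀ (by norm_num : (0 : ℚ) < 3)]
    have hx' : (((n + 2) / 3 : ℕ) : ℚ) * 3 ≤ (n : ℚ) + 2 := by exact_mod_cast hx
    rw [Int.cast_sub, Int.cast_natCast, Int.cast_one]
    linarith
  have hcast : ((sdepth (pathIdeal K n n) : ℕ) : ℤ) ≤ (((n + 2) / 3 : ℕ) : ℤ) := by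
    exact_mod_cast hsd
  omega
end

section
/- Let t ≥ 1, let G be a finite simple graph on vertex set {x_1,…,x_n}, let u and v be vertices of G, let I = I(G) be the edge ideal of G in S = K[x_1,…,x_n], and let s ≥ 0 be an integer. If sdepth(S/(I^t : uv)) ≥ s, sdepth(S/(I^t, u)) ≥ s, and sdepth(S/((I^t : u), v)) ≥ s, then sdepth(S/I^t) ≥ s. -/
open MvPolynomial

/-- The edge ideal `I(G)` of a finite simple graph `G` on the vertex set
`{x_1, …, x_n}`: the ideal of `S = K[x_1, …, x_n]` generated by all monomials
`x_i x_j` such that `{x_i, x_j}` is an edge of `G`. -/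
noncomputable def edgeIdeal (K : Type*) [Field K] {n : ℕ} (G : SimpleGraph (Fin n)) :
    Ideal (MvPolynomial (Fin n) K) :=
  Ideal.span {p | ∃ i j : Fin n, G.Adj i j ∧ p = X i * X j}

section Aux

open Pointwise

variable {K : Type*} [Field K] {n : ℕ}

private lemma monX_mul (i j : Fin n) : (X i * X j : MvPolynomial (Fin n) K) =
    monomial (Finsupp.single i 1 + Finsupp.single j 1) 1 := by
  rw [← pow_one (X i), ← pow_one (X j), X_pow_eq_monomial, X_pow_eq_monomial,
    monomial_mul, one_mul]

private lemma mem_span_image_monomial {T : Set (Fin n →₀ ℕ)} {a : Fin n →₀ ℕ} :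
    monomial a (1:K) ∈ Ideal.span ((fun d => monomial d (1:K)) '' T) ↔ ∃ d ∈ T, d ≤ a := by
  rw [mem_ideal_span_monomial_image]
  simp [support_monomial]

private lemma pow_edgeIdeal_eq_span (K : Type*) [Field K] {n : ℕ} (G : SimpleGraph (Fin n))
    (t : ℕ) (ht : 1 ≤ t) : ∃ T : Set (Fin n →₀ ℕ), (∀ d ∈ T, d ≠ 0) ∧
      (edgeIdeal K G) ^ t = Ideal.span ((fun d => monomial d (1 : K)) '' T) := by
  set T1 : Set (Fin n →₀ ℕ) :=
    {d | ∃ i j, G.Adj i j ∧ d = Finsupp.single i 1 + Finsupp.single j 1} with hT1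
  have base : edgeIdeal K G = Ideal.span ((fun d => monomial d (1:K)) '' T1) := by
    unfold edgeIdeal
    congr 1
    ext p
    constructor
    · rintro ⟨i, j, hij, rfl⟩
      exact ⟨_, ⟨i, j, hij, rfl⟩, (monX_mul i j).symm⟩
    · rintro ⟨d, ⟨i, j, hij, rfl⟩, rfl⟩
      exact ⟨i, j, hij, (monX_mul i j).symm⟩
  have hT1ne : ∀ d ∈ T1, d ≠ 0 := by
    rintro d ⟨i, j, hij, rfl⟩ h0
    have h1 := DFunLike.congr_fun h0 i
    simp at h1
  induction t with
  | zero => omega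
  | succ t ih =>
    rcases Nat.eq_or_lt_of_le ht with h | h
    · exact ⟨T1, hT1ne, by rw [← h, pow_one]; exact base⟩
    · obtain ⟨T, hTne, hT⟩ := ih (by omega)
      refine ⟨T + T1, ?_, ?_⟩
      · rintro d hd
        rw [Set.mem_add] at hd
        obtain ⟨a, ha, b, hb, rfl⟩ := hd
        intro h0
        exact hT1ne b hb (by simpa using (add_eq_zero.mp h0).2)
      · rw [pow_succ, hT, base, Ideal.span_mul_span']
        congr 1
        ext p
        rw [Set.mem_mul]
        constructor
        · rintro ⟨x, ⟨a, ha, rfl⟩, y, ⟨b, hb, rfl⟩, rfl⟩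
          exact ⟨a + b, Set.add_mem_add ha hb, by rw [monomial_mul, one_mul]⟩
        · rintro ⟨d, hd, rfl⟩
          rw [Set.mem_add] at hd
          obtain ⟨a, ha, b, hb, rfl⟩ := hd
          exact ⟨_, ⟨a, ha, rfl⟩, _, ⟨b, hb, rfl⟩, by rw [monomial_mul, one_mul]⟩

end Aux

section Aux2

variable {K : Type*} [Field K] {n : ℕ}

private lemma X_eq_monomial (w : Fin n) :
    (X w : MvPolynomial (Fin n) K) = monomial (Finsupp.single w 1) 1 := by
  rw [← pow_one (X w), X_pow_eq_monomial]

private lemma mem_sup_single {T : Set (Fin n →₀ ℕ)} {a : Fin n →₀ ℕ} (w : Fin n) :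
    monomial a (1:K) ∈ Ideal.span ((fun d => monomial d (1:K)) '' T) ⊔ Ideal.span {X w} ↔
      (∃ d ∈ T, d ≤ a) ∨ Finsupp.single w 1 ≤ a := by
  have h1 : ({X w} : Set (MvPolynomial (Fin n) K)) =
      (fun d => monomial d (1:K)) '' {Finsupp.single w 1} := by
    rw [Set.image_singleton, X_eq_monomial]
  rw [← Ideal.span_union, h1, ← Set.image_union, mem_span_image_monomial]
  constructor
  · rintro ⟨d, hd | hd, hle⟩
    · exact Or.inl ⟨d, hd, hle⟩
    · rw [Set.mem_singleton_iff] at hd; subst hd; exact Or.inr hle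
  · rintro (⟨d, hd, hle⟩ | hle)
    · exact ⟨d, Or.inl hd, hle⟩
    · exact ⟨_, Or.inr rfl, hle⟩

private lemma colon_eq_span (T : Set (Fin n →₀ ℕ)) (w : Fin n) :
    (Ideal.span ((fun d => monomial d (1:K)) '' T)).colon (Ideal.span {X w} : Ideal (MvPolynomial (Fin n) K)) =
      Ideal.span ((fun d => monomial d (1:K)) '' ((fun d => d - Finsupp.single w 1) '' T)) := by
  apply le_antisymm
  · intro f hf
    rw [Ideal.mem_colon_span_singleton] at hf
    rw [mem_ideal_span_monomial_image] at hf ⊢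
    intro xi hxi
    have hsup : xi + Finsupp.single w 1 ∈ (f * X w).support := by
      rw [mem_support_iff, X_eq_monomial, coeff_mul_monomial, mul_one]
      exact mem_support_iff.mp hxi
    obtain ⟨d, hd, hle⟩ := hf _ hsup
    exact ⟨d - Finsupp.single w 1, Set.mem_image_of_mem _ hd, tsub_le_iff_right.mpr hle⟩
  · rw [Ideal.span_le]
    rintro _ ⟨_, ⟨d, hd, rfl⟩, rfl⟩
    rw [SetLike.mem_coe, Ideal.mem_colon_span_singleton, X_eq_monomial, monomial_mul, mul_one,
      mem_span_image_monomial]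
    exact ⟨d, hd, le_tsub_add⟩

private lemma mem_colon_sup {T : Set (Fin n →₀ ℕ)} {b : Fin n →₀ ℕ} (w w' : Fin n) :
    monomial b (1:K) ∈
      (Ideal.span ((fun d => monomial d (1:K)) '' T)).colon (Ideal.span {X w} : Ideal (MvPolynomial (Fin n) K)) ⊔
        Ideal.span {X w'} ↔
      (∃ d ∈ T, d ≤ b + Finsupp.single w 1) ∨ Finsupp.single w' 1 ≤ b := by
  rw [colon_eq_span, mem_sup_single]
  constructor
  · rintro (⟨d, ⟨c, hc, rfl⟩, hle⟩ | hle)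
    · exact Or.inl ⟨c, hc, tsub_le_iff_right.mp hle⟩
    · exact Or.inr hle
  · rintro (⟨d, hd, hle⟩ | hle)
    · exact Or.inl ⟨_, Set.mem_image_of_mem _ hd, tsub_le_iff_right.mpr hle⟩
    · exact Or.inr hle

private lemma mem_colon_pair {T : Set (Fin n →₀ ℕ)} {c : Fin n →₀ ℕ} (u v : Fin n) :
    monomial c (1:K) ∈
      (Ideal.span ((fun d => monomial d (1:K)) '' T)).colon (Ideal.span {X u * X v} : Ideal (MvPolynomial (Fin n) K)) ↔
      monomial (c + Finsupp.single u 1 + Finsupp.single v 1) (1:K) ∈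
        Ideal.span ((fun d => monomial d (1:K)) '' T) := by
  rw [Ideal.mem_colon_span_singleton, ← mul_assoc, X_eq_monomial, X_eq_monomial, monomial_mul,
    monomial_mul, mul_one, mul_one]

end Aux2

section Combine

variable {K : Type*} [Field K] {n : ℕ}

private lemma combine (J A B C : Ideal (MvPolynomial (Fin n) K)) (u v : Fin n)
    (hA : ∀ a : Fin n →₀ ℕ, (monomial a (1:K)) ∈ A ↔
      (monomial (a + Finsupp.single u 1 + Finsupp.single v 1) (1:K)) ∈ J)
    (hB : ∀ a : Fin n →₀ ℕ, (monomial a (1:K)) ∈ B ↔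
      ((monomial a (1:K)) ∈ J ∨ Finsupp.single u 1 ≤ a))
    (hC : ∀ a : Fin n →₀ ℕ, (monomial a (1:K)) ∈ C ↔
      ((monomial (a + Finsupp.single u 1) (1:K)) ∈ J ∨ Finsupp.single v 1 ≤ a))
    {D1 D2 D3 : Finset ((Fin n →₀ ℕ) × Finset (Fin n))}
    (hD1 : IsStanleyDecomp A D1) (hD2 : IsStanleyDecomp B D2) (hD3 : IsStanleyDecomp C D3) :
    ∃ D : Finset ((Fin n →₀ ℕ) × Finset (Fin n)), IsStanleyDecomp J D ∧
      ∀ p ∈ D, ∃ q : (Fin n →₀ ℕ) × Finset (Fin n),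
        (q ∈ D1 ∨ q ∈ D2 ∨ q ∈ D3) ∧ p.2 = q.2 := by
  classical
  set eu := Finsupp.single u 1 with heu
  set ev := Finsupp.single v 1 with hev
  set f3 : (Fin n →₀ ℕ) × Finset (Fin n) → (Fin n →₀ ℕ) × Finset (Fin n) :=
    fun p => (p.1 + eu, p.2) with hf3
  set f1 : (Fin n →₀ ℕ) × Finset (Fin n) → (Fin n →₀ ℕ) × Finset (Fin n) :=
    fun p => (p.1 + eu + ev, p.2) with hf1
  refine ⟨D2 ∪ (D3.image f3 ∪ D1.image f1), ⟨?_, ?_⟩, ?_⟩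
  · -- condition 1
    rintro p hp w hw
    rw [Finset.mem_union, Finset.mem_union] at hp
    rcases hp with hp | hp | hp
    · intro hJ
      exact hD2.1 p hp w hw ((hB _).mpr (Or.inl hJ))
    · obtain ⟨q, hq, rfl⟩ := Finset.mem_image.mp hp
      intro hJ
      apply hD3.1 q hq w hw
      refine (hC _).mpr (Or.inl ?_)
      have he : q.1 + w + eu = (f3 q).1 + w := by
        simp only [hf3]; exact add_right_comm _ _ _
      rwa [he]
    · obtain ⟨q, hq, rfl⟩ := Finset.mem_image.mp hp
      intro hJ
      apply hD1.1 q hq w hw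
      refine (hA _).mpr ?_
      have he : q.1 + w + eu + ev = (f1 q).1 + w := by
        simp only [hf1]; abel
      rwa [he]
  · -- condition 2
    intro a ha
    by_cases hu : eu ≤ a
    · by_cases hv : ev ≤ a - eu
      · -- case A
        have huv : eu + ev ≤ a := by
          rw [add_comm]
          exact (le_tsub_iff_right hu).mp hv
        set c := a - (eu + ev) with hc
        have hca : c + eu + ev = a := by
          rw [add_assoc, tsub_add_cancel_of_le huv]
        have hcA : monomial c (1:K) ∉ A := fun h => ha (by rw [← hca]; exact (hA c).mp h)
        obtain ⟨q, ⟨hq, w, hw, hcw⟩, huniq⟩ := hD1.2 c hcA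
        refine ⟨f1 q, ⟨?_, w, hw, ?_⟩, ?_⟩
        · rw [Finset.mem_union, Finset.mem_union]
          exact Or.inr (Or.inr (Finset.mem_image_of_mem _ hq))
        · rw [← hca, hcw]
          show q.1 + w + eu + ev = q.1 + eu + ev + w
          abel
        · rintro p' ⟨hp', w', hw', haw'⟩
          rw [Finset.mem_union, Finset.mem_union] at hp'
          rcases hp' with h2 | h3 | h1
          · have hne := hD2.1 p' h2 w' hw'
            rw [hB] at hne
            push_neg at hne
            exact absurd (haw' ▸ hu) hne.2
          · obtain ⟨q', hq', rfl⟩ := Finset.mem_image.mp h3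
            have hne := hD3.1 q' hq' w' hw'
            rw [hC] at hne
            push_neg at hne
            have heq : a - eu = q'.1 + w' := by
              rw [haw']
              show q'.1 + eu + w' - eu = q'.1 + w'
              rw [add_right_comm, add_tsub_cancel_right]
            exact (hne.2 (heq ▸ hv)).elim
          · obtain ⟨q', hq', rfl⟩ := Finset.mem_image.mp h1
            have hc' : c = q'.1 + w' := by
              rw [hc, haw']
              show q'.1 + eu + ev + w' - (eu + ev) = q'.1 + w'
              have : q'.1 + eu + ev + w' = (q'.1 + w') + (eu + ev) := by abel
              rw [this, add_tsub_cancel_right]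
            rw [huniq q' ⟨hq', w', hw', hc'⟩]
      · -- case C
        set b := a - eu with hb
        have hba : b + eu = a := tsub_add_cancel_of_le hu
        have hbC : monomial b (1:K) ∉ C := by
          intro h
          rcases (hC b).mp h with h' | h'
          · exact ha (hba ▸ h')
          · exact hv h'
        obtain ⟨q, ⟨hq, w, hw, hbw⟩, huniq⟩ := hD3.2 b hbC
        refine ⟨f3 q, ⟨?_, w, hw, ?_⟩, ?_⟩
        · rw [Finset.mem_union, Finset.mem_union]
          exact Or.inr (Or.inl (Finset.mem_image_of_mem _ hq))
        · rw [← hba, hbw]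
          show q.1 + w + eu = q.1 + eu + w
          exact add_right_comm _ _ _
        · rintro p' ⟨hp', w', hw', haw'⟩
          rw [Finset.mem_union, Finset.mem_union] at hp'
          rcases hp' with h2 | h3 | h1
          · have hne := hD2.1 p' h2 w' hw'
            rw [hB] at hne
            push_neg at hne
            exact absurd (haw' ▸ hu) hne.2
          · obtain ⟨q', hq', rfl⟩ := Finset.mem_image.mp h3
            have heq : b = q'.1 + w' := by
              rw [hb, haw']
              show q'.1 + eu + w' - eu = q'.1 + w'
              rw [add_right_comm, add_tsub_cancel_right]
            rw [huniq q' ⟨hq', w', hw', heq⟩]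
          · obtain ⟨q', hq', rfl⟩ := Finset.mem_image.mp h1
            exfalso
            apply hv
            have heq : a - eu = q'.1 + ev + w' := by
              rw [haw']
              show q'.1 + eu + ev + w' - eu = q'.1 + ev + w'
              have : q'.1 + eu + ev + w' = (q'.1 + ev + w') + eu := by abel
              rw [this, add_tsub_cancel_right]
            rw [hb, heq]
            calc ev ≤ q'.1 + ev := le_add_self
              _ ≤ q'.1 + ev + w' := le_self_add
    · -- case B
      have haB : monomial a (1:K) ∉ B := by
        intro h
        rcases (hB a).mp h with h' | h'
        · exact ha h'
        · exact hu h'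
      obtain ⟨q, ⟨hq, w, hw, haw⟩, huniq⟩ := hD2.2 a haB
      refine ⟨q, ⟨?_, w, hw, haw⟩, ?_⟩
      · rw [Finset.mem_union]
        exact Or.inl hq
      · rintro p' ⟨hp', w', hw', haw'⟩
        rw [Finset.mem_union, Finset.mem_union] at hp'
        rcases hp' with h2 | h3 | h1
        · exact huniq p' ⟨h2, w', hw', haw'⟩
        · obtain ⟨q', hq', rfl⟩ := Finset.mem_image.mp h3
          exfalso
          apply hu
          rw [haw']
          show eu ≤ q'.1 + eu + w'
          calc eu ≤ q'.1 + eu := le_add_self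
            _ ≤ q'.1 + eu + w' := le_self_add
        · obtain ⟨q', hq', rfl⟩ := Finset.mem_image.mp h1
          exfalso
          apply hu
          rw [haw']
          show eu ≤ q'.1 + eu + ev + w'
          calc eu ≤ q'.1 + eu := le_add_self
            _ ≤ q'.1 + eu + ev + w' := by
              rw [add_assoc]; exact le_self_add
  · -- cards
    intro p hp
    rw [Finset.mem_union, Finset.mem_union] at hp
    rcases hp with hp | hp | hp
    · exact ⟨p, Or.inr (Or.inl hp), rfl⟩
    · obtain ⟨q, hq, rfl⟩ := Finset.mem_image.mp hp
      exact ⟨q, Or.inr (Or.inr hq), rfl⟩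
    · obtain ⟨q, hq, rfl⟩ := Finset.mem_image.mp hp
      exact ⟨q, Or.inl hq, rfl⟩

end Combine

section Final

variable {K : Type*} [Field K] {n : ℕ}

private lemma exists_decomp_of_le_sdepth {I : Ideal (MvPolynomial (Fin n) K)} {s : ℕ}
    (hs : 1 ≤ s) (h : s ≤ sdepth I) :
    ∃ D, IsStanleyDecomp I D ∧ ∀ p ∈ D, s ≤ p.2.card := by
  set S := {s' : ℕ | ∃ D, IsStanleyDecomp I D ∧ ∀ p ∈ D, s' ≤ p.2.card} with hS
  have : ∃ s' ∈ S, s ≤ s' := by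
    by_cases hb : BddAbove S
    · have hne : S.Nonempty := by
        by_contra hne
        rw [Set.not_nonempty_iff_eq_empty] at hne
        rw [sdepth, ← hS, hne] at h
        simp at h
        omega
      exact ⟨sSup S, Nat.sSup_mem hne hb, h⟩
    · rw [not_bddAbove_iff] at hb
      obtain ⟨y, hy, hlt⟩ := hb s
      exact ⟨y, hy, hlt.le⟩
  obtain ⟨s', ⟨D, hD, hcard⟩, hss'⟩ := this
  exact ⟨D, hD, fun p hp => hss'.trans (hcard p hp)⟩

private lemma le_sdepth_of_decomp {I : Ideal (MvPolynomial (Fin n) K)} {s : ℕ}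
    (hI : (1 : MvPolynomial (Fin n) K) ∉ I)
    (hD : ∃ D, IsStanleyDecomp I D ∧ ∀ p ∈ D, s ≤ p.2.card) :
    s ≤ sdepth I := by
  apply le_csSup
  · refine ⟨n, ?_⟩
    rintro s' ⟨D, hDec, hcard⟩
    have h1 : (monomial (0 : Fin n →₀ ℕ) (1:K)) ∉ I := by
      rwa [monomial_zero', C_1]
    obtain ⟨p, ⟨hp, _⟩, _⟩ := hDec.2 0 h1
    calc s' ≤ p.2.card := hcard p hp
      _ ≤ Fintype.card (Fin n) := Finset.card_le_univ _
      _ = n := Fintype.card_fin n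
  · exact hD

end Final


/-- Let `t ≥ 1`, `G` a finite simple graph on `{x_1, …, x_n}`, `u, v` vertices of
`G`, `I = I(G)` its edge ideal in `S = K[x_1, …, x_n]` and `s ≥ 0`. If
`sdepth (S/(Iᵗ : uv)) ≥ s`, `sdepth (S/(Iᵗ, u)) ≥ s` and
`sdepth (S/((Iᵗ : u), v)) ≥ s`, then `sdepth (S/Iᵗ) ≥ s`. -/
theorem sdepth_pow_ge_of_colon {K : Type*} [Field K] {n : ℕ} (t : ℕ) (ht : 1 ≤ t)
    (G : SimpleGraph (Fin n)) (u v : Fin n) (s : ℕ)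
    (h1 : s ≤ sdepth (((edgeIdeal K G) ^ t).colon (Ideal.span {X u * X v} : Ideal (MvPolynomial (Fin n) K))))
    (h2 : s ≤ sdepth ((edgeIdeal K G) ^ t ⊔ Ideal.span {X u}))
    (h3 : s ≤ sdepth ((((edgeIdeal K G) ^ t).colon (Ideal.span {X u} : Ideal (MvPolynomial (Fin n) K))) ⊔ Ideal.span {X v})) :
    s ≤ sdepth ((edgeIdeal K G) ^ t) := by
  rcases Nat.eq_zero_or_pos s with rfl | hs
  · exact Nat.zero_le _
  obtain ⟨T, hTne, hT⟩ := pow_edgeIdeal_eq_span K G t ht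
  set J := (edgeIdeal K G) ^ t with hJ
  obtain ⟨D1, hD1, hc1⟩ := exists_decomp_of_le_sdepth hs h1
  obtain ⟨D2, hD2, hc2⟩ := exists_decomp_of_le_sdepth hs h2
  obtain ⟨D3, hD3, hc3⟩ := exists_decomp_of_le_sdepth hs h3
  have hA : ∀ a : Fin n →₀ ℕ, (monomial a (1:K)) ∈ J.colon (Ideal.span {X u * X v} : Ideal (MvPolynomial (Fin n) K)) ↔
      (monomial (a + Finsupp.single u 1 + Finsupp.single v 1) (1:K)) ∈ J := by
    intro a
    rw [hT]
    exact mem_colon_pair u v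
  have hB : ∀ a : Fin n →₀ ℕ, (monomial a (1:K)) ∈ J ⊔ Ideal.span {X u} ↔
      ((monomial a (1:K)) ∈ J ∨ Finsupp.single u 1 ≤ a) := by
    intro a
    rw [hT, mem_sup_single, mem_span_image_monomial]
  have hC : ∀ a : Fin n →₀ ℕ,
      (monomial a (1:K)) ∈ J.colon (Ideal.span {X u} : Ideal (MvPolynomial (Fin n) K)) ⊔ Ideal.span {X v} ↔
      ((monomial (a + Finsupp.single u 1) (1:K)) ∈ J ∨ Finsupp.single v 1 ≤ a) := by
    intro a
    rw [hT, mem_colon_sup, mem_span_image_monomial]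
  obtain ⟨D, hD, hDq⟩ := combine J _ _ _ u v hA hB hC hD1 hD2 hD3
  apply le_sdepth_of_decomp
  · -- 1 ∉ J
    intro hone
    have : monomial (0 : Fin n →₀ ℕ) (1:K) ∈ J := by rwa [monomial_zero', C_1]
    rw [hT, mem_span_image_monomial] at this
    obtain ⟨d, hd, hle⟩ := this
    exact hTne d hd (nonpos_iff_eq_zero.mp hle)
  · refine ⟨D, hD, fun p hp => ?_⟩
    obtain ⟨q, hq, hpq⟩ := hDq p hp
    rw [hpq]
    rcases hq with hq | hq | hq
    · exact hc1 q hq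
    · exact hc2 q hq
    · exact hc3 q hq
end

section
/- Let n ≥ 2, t ≥ 2, K a field, S = K[x_1,…,x_n], and I = I(P_n) the edge ideal of the path P_n. Then (I^t : x_{n−1} x_n) = I^{t−1}. -/
open MvPolynomial

namespace PathColonAux

/-- The set of exponent vectors of the edge generators of the path ideal. -/
def EV (n : ℕ) : Set (Fin n →₀ ℕ) :=
  {d | ∃ i j : Fin n, (j : ℕ) = (i : ℕ) + 1 ∧ (i : ℕ) + 2 ≤ n ∧
    d = Finsupp.single i 1 + Finsupp.single j 1}

/-- The set of exponent vectors which are sums of `t` edge vectors. -/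
def Dset (n t : ℕ) : Set (Fin n →₀ ℕ) :=
  {d | ∃ S : Multiset (Fin n →₀ ℕ), Multiset.card S = t ∧ (∀ x ∈ S, x ∈ EV n) ∧ d = S.sum}

lemma pathIdeal_eq (K : Type*) [Field K] (n : ℕ) :
    pathIdeal K n n = Ideal.span ((fun s => monomial s (1 : K)) '' EV n) := by
  unfold pathIdeal EV
  congr 1
  ext p
  simp only [Set.mem_setOf_eq, Set.mem_image]
  constructor
  · rintro ⟨i, j, h1, h2, rfl⟩
    exact ⟨_, ⟨i, j, h1, h2, rfl⟩, by rw [X, X, monomial_mul, one_mul]⟩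
  · rintro ⟨d, ⟨i, j, h1, h2, rfl⟩, rfl⟩
    exact ⟨i, j, h1, h2, by rw [X, X, monomial_mul, one_mul]⟩

lemma pow_eq (K : Type*) [Field K] (n t : ℕ) :
    (pathIdeal K n n) ^ t = Ideal.span ((fun s => monomial s (1 : K)) '' Dset n t) := by
  induction t with
  | zero =>
    have hD : Dset n 0 = {0} := by
      ext d
      constructor
      · rintro ⟨S, hc, -, rfl⟩
        rw [Multiset.card_eq_zero] at hc
        simp [hc]
      · rintro rfl
        exact ⟨0, rfl, by simp, by simp⟩
    rw [pow_zero, hD, Set.image_singleton]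
    have : (monomial (0 : Fin n →₀ ℕ) (1 : K)) = 1 := by simp
    rw [this, Ideal.span_singleton_one, Ideal.one_eq_top]
  | succ t ih =>
    rw [pow_succ, ih, pathIdeal_eq, Ideal.span_mul_span']
    congr 1
    ext p
    simp only [Set.mem_mul, Set.mem_image]
    constructor
    · rintro ⟨q, ⟨d, ⟨S, hc, hS, rfl⟩, rfl⟩, r, ⟨e, he, rfl⟩, rfl⟩
      refine ⟨S.sum + e, ⟨e ::ₘ S, ?_, ?_, ?_⟩, ?_⟩
      · simp [hc]
      · intro x hx
        rcases Multiset.mem_cons.mp hx with h | h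
        · exact h ▸ he
        · exact hS x h
      · simp [add_comm]
      · rw [monomial_mul, one_mul]
    · rintro ⟨d, ⟨S, hc, hS, rfl⟩, rfl⟩
      have hpos : 0 < Multiset.card S := by omega
      obtain ⟨e, he⟩ := Multiset.card_pos_iff_exists_mem.mp hpos
      refine ⟨monomial (S.erase e).sum 1, ⟨(S.erase e).sum, ⟨S.erase e, ?_, ?_, rfl⟩, rfl⟩,
        monomial e 1, ⟨e, hS e he, rfl⟩, ?_⟩
      · rw [Multiset.card_erase_of_mem he, hc]; rfl
      · intro x hx; exact hS x (Multiset.mem_of_mem_erase hx)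
      · rw [monomial_mul, one_mul]
        congr 1
        conv_rhs => rw [← Multiset.cons_erase he]
        rw [Multiset.sum_cons, add_comm]

section Core

variable {n : ℕ} (hn : 2 ≤ n)

/-- coordinates of an edge vector different from the last edge -/
lemma ev_coords (ha : n - 2 < n) (hb : n - 1 < n) {ε : Fin n →₀ ℕ} (hε : ε ∈ EV n)
    (hne : ε ≠ Finsupp.single (⟨n - 2, ha⟩ : Fin n) 1 + Finsupp.single (⟨n - 1, hb⟩ : Fin n) 1) :
    ε ⟨n - 1, hb⟩ = 0 ∧ ε ⟨n - 2, ha⟩ ≤ 1 := by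
  obtain ⟨i, j, hij, hi2, rfl⟩ := hε
  have hib : i ≠ (⟨n - 1, hb⟩ : Fin n) := by
    intro h
    have : (i : ℕ) = n - 1 := by rw [h]
    omega
  have hia : i = (⟨n - 2, ha⟩ : Fin n) → False := by
    intro h
    have hiv : (i : ℕ) = n - 2 := by rw [h]
    have hjv : j = (⟨n - 1, hb⟩ : Fin n) := by
      apply Fin.ext
      simp only [hij, hiv]
      omega
    exact hne (by rw [h, hjv])
  have hjb : ¬ j = (⟨n - 1, hb⟩ : Fin n) := by
    intro h
    have hjv : (j : ℕ) = n - 1 := by rw [h]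
    apply hia
    apply Fin.ext
    simp only
    omega
  constructor
  · simp [Finsupp.single_apply, hib, hjb]
  · rw [Finsupp.add_apply, Finsupp.single_apply, Finsupp.single_apply,
      if_neg (fun h => hia h)]
    split <;> omega

lemma erase_sum {t : ℕ} {S : Multiset (Fin n →₀ ℕ)} (hc : Multiset.card S = t)
    (hS : ∀ x ∈ S, x ∈ EV n) {ε : Fin n →₀ ℕ} (hε : ε ∈ S) :
    (S.erase ε).sum ∈ Dset n (t - 1) ∧ S.sum = ε + (S.erase ε).sum := by
  refine ⟨⟨S.erase ε, by rw [Multiset.card_erase_of_mem hε, hc]; rfl,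
    fun x hx => hS x (Multiset.mem_of_mem_erase hx), rfl⟩, ?_⟩
  conv_lhs => rw [← Multiset.cons_erase hε]
  rw [Multiset.sum_cons]

include hn in
/-- The key combinatorial lemma, forward direction. -/
lemma core (ha : n - 2 < n) (hb : n - 1 < n) {t : ℕ} (ht : 1 ≤ t) {d m : Fin n →₀ ℕ}
    (hd : d ∈ Dset n t)
    (hle : d ≤ m + Finsupp.single (⟨n - 2, ha⟩ : Fin n) 1
      + Finsupp.single (⟨n - 1, hb⟩ : Fin n) 1) :
    ∃ d' ∈ Dset n (t - 1), d' ≤ m := by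
  set a : Fin n := ⟨n - 2, ha⟩ with ha'
  set b : Fin n := ⟨n - 1, hb⟩ with hb'
  set v : Fin n →₀ ℕ := Finsupp.single a 1 + Finsupp.single b 1 with hv
  have hab : a ≠ b := by
    intro h
    have : n - 2 = n - 1 := congrArg Fin.val h
    omega
  have hva : v a = 1 := by
    simp [hv, Finsupp.single_eq_of_ne' hab.symm]
  have hvb : v b = 1 := by
    simp [hv, Finsupp.single_eq_of_ne' hab]
  have hvx : ∀ x : Fin n, x ≠ a → x ≠ b → v x = 0 := by
    intro x hxa hxb
    simp [hv, Finsupp.single_eq_of_ne' (Ne.symm hxa), Finsupp.single_eq_of_ne' (Ne.symm hxb)]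
  have hle' : ∀ x, d x ≤ m x + v x := by
    intro x
    have := hle x
    simp only [Finsupp.add_apply] at this ⊢
    rw [hv, Finsupp.add_apply]
    omega
  obtain ⟨S, hc, hS, rfl⟩ := hd
  by_cases hvS : v ∈ S
  · -- the last edge occurs in the decomposition: remove it
    obtain ⟨hmem, hsum⟩ := erase_sum hc hS hvS
    refine ⟨(S.erase v).sum, hmem, Finsupp.le_def.mpr fun x => ?_⟩
    have h1 := hle' x
    have h2 : S.sum x = v x + (S.erase v).sum x := by rw [hsum, Finsupp.add_apply]
    omega
  · -- the last edge does not occur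
    have hcoords : ∀ ε ∈ S, ε b = 0 ∧ ε a ≤ 1 := by
      intro ε hε
      exact ev_coords ha hb (hS ε hε) (fun h => hvS (by rw [hv, ← h]; exact hε))
    have happly : ∀ x : Fin n, S.sum x = (S.map (fun f => f x)).sum := by
      intro x
      exact map_multiset_sum (Finsupp.applyAddHom x) S
    have hdb : S.sum b = 0 := by
      rw [happly]
      apply Multiset.sum_eq_zero
      intro y hy
      obtain ⟨ε, hε, rfl⟩ := Multiset.mem_map.mp hy
      exact (hcoords ε hε).1
    by_cases hda : S.sum a ≤ m a
    · -- d ≤ m already; remove an arbitrary edge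
      have hpos : 0 < Multiset.card S := by omega
      obtain ⟨ε, hε⟩ := Multiset.card_pos_iff_exists_mem.mp hpos
      obtain ⟨hmem, hsum⟩ := erase_sum hc hS hε
      refine ⟨(S.erase ε).sum, hmem, Finsupp.le_def.mpr fun x => ?_⟩
      have h2 : S.sum x = ε x + (S.erase ε).sum x := by rw [hsum, Finsupp.add_apply]
      by_cases hxa : x = a
      · subst hxa; omega
      · by_cases hxb : x = b
        · subst hxb; omega
        · have h1 := hle' x
          rw [hvx x hxa hxb] at h1
          omega
    · -- some edge uses the vertex `a`; remove it
      have hex : ∃ ε ∈ S, ε a ≠ 0 := by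
        by_contra hcon
        push_neg at hcon
        have : S.sum a = 0 := by
          rw [happly]
          apply Multiset.sum_eq_zero
          intro y hy
          obtain ⟨ε, hε, rfl⟩ := Multiset.mem_map.mp hy
          exact hcon ε hε
        omega
      obtain ⟨ε, hε, hεa⟩ := hex
      obtain ⟨hmem, hsum⟩ := erase_sum hc hS hε
      refine ⟨(S.erase ε).sum, hmem, Finsupp.le_def.mpr fun x => ?_⟩
      have h2 : S.sum x = ε x + (S.erase ε).sum x := by rw [hsum, Finsupp.add_apply]
      by_cases hxa : x = a
      · subst hxa
        have h1 := hle' a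
        have h3 := (hcoords ε hε).2
        rw [hva] at h1
        omega
      · by_cases hxb : x = b
        · subst hxb; omega
        · have h1 := hle' x
          rw [hvx x hxa hxb] at h1
          omega

include hn in
/-- The key combinatorial lemma, backward direction. -/
lemma core' (ha : n - 2 < n) (hb : n - 1 < n) {t : ℕ} (ht : 1 ≤ t) {d' m : Fin n →₀ ℕ}
    (hd : d' ∈ Dset n (t - 1)) (hle : d' ≤ m) :
    ∃ d ∈ Dset n t, d ≤ m + Finsupp.single (⟨n - 2, ha⟩ : Fin n) 1
      + Finsupp.single (⟨n - 1, hb⟩ : Fin n) 1 := by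
  set a : Fin n := ⟨n - 2, ha⟩
  set b : Fin n := ⟨n - 1, hb⟩
  set v : Fin n →₀ ℕ := Finsupp.single a 1 + Finsupp.single b 1 with hv
  have hvEV : v ∈ EV n := by
    refine ⟨a, b, ?_, ?_, rfl⟩ <;> simp only [a, b] <;> omega
  obtain ⟨S, hc, hS, rfl⟩ := hd
  refine ⟨v + S.sum, ⟨v ::ₘ S, ?_, ?_, by rw [Multiset.sum_cons]⟩, ?_⟩
  · simp only [Multiset.card_cons, hc]; omega
  · intro x hx
    rcases Multiset.mem_cons.mp hx with h | h
    · exact h ▸ hvEV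
    · exact hS x h
  · intro x
    have h1 := hle x
    simp only [Finsupp.add_apply, hv]
    omega

end Core

end PathColonAux

open PathColonAux in
/-- For `n ≥ 2`, `t ≥ 2` and `I = I(P_n)` the edge ideal of the path `P_n` in
`S = K[x_1, …, x_n]`, one has `(Iᵗ : x_{n-1} x_n) = I ^ (t - 1)`. -/
theorem pathIdeal_pow_colon_edge {K : Type*} [Field K] (n t : ℕ) (hn : 2 ≤ n) (ht : 2 ≤ t) :
    ((pathIdeal K n n) ^ t).colon
        ((Ideal.span {X (⟨n - 2, by omega⟩ : Fin n) * X (⟨n - 1, by omega⟩ : Fin n)} :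
          Ideal (MvPolynomial (Fin n) K)) : Set (MvPolynomial (Fin n) K)) =
      (pathIdeal K n n) ^ (t - 1) := by
  have ha : n - 2 < n := by omega
  have hb : n - 1 < n := by omega
  ext f
  rw [Ideal.mem_colon_span_singleton, pow_eq, pow_eq, mem_ideal_span_monomial_image,
    mem_ideal_span_monomial_image]
  have hsupp : ∀ xi, xi ∈ (f * (X (⟨n - 2, ha⟩ : Fin n) * X (⟨n - 1, hb⟩ : Fin n))).support ↔
      ∃ m ∈ f.support, xi = m + Finsupp.single (⟨n - 2, ha⟩ : Fin n) 1
        + Finsupp.single (⟨n - 1, hb⟩ : Fin n) 1 := by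
    intro xi
    rw [← mul_assoc, support_mul_X, support_mul_X]
    simp only [Finset.mem_map, AddMonoidHom.coe_mk, addRightEmbedding_apply]
    constructor
    · rintro ⟨y, ⟨m, hm, rfl⟩, rfl⟩
      exact ⟨m, hm, rfl⟩
    · rintro ⟨m, hm, rfl⟩
      exact ⟨_, ⟨m, hm, rfl⟩, rfl⟩
  constructor
  · intro h m hm
    obtain ⟨d, hd, hle⟩ := h _ ((hsupp _).mpr ⟨m, hm, rfl⟩)
    exact core hn ha hb (by omega) hd hle
  · intro h xi hxi
    obtain ⟨m, hm, rfl⟩ := (hsupp xi).mp hxi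
    obtain ⟨d', hd', hle⟩ := h m hm
    exact core' hn ha hb (by omega) hd' hle
end

section
/- Let n ≥ 3, t ≥ 1, K a field, S = K[x_1,…,x_n], I = I(P_n) the edge ideal of the path P_n, and L = I(P_{n−1}) the edge ideal of the path P_{n−1} on x_1,…,x_{n−1}, regarded as an ideal of S. Then ((I^t : x_{n−1}), x_n) = ((L^t : x_{n−1}), x_n). -/
open MvPolynomial

private lemma sub_aeval_mem {K : Type*} [Field K] {n : ℕ} (b : Fin n)
    (f : MvPolynomial (Fin n) K) :
    f - aeval (fun i => if i = b then 0 else X i) f ∈ Ideal.span {X b} := by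
  induction f using MvPolynomial.induction_on with
  | C a => simp
  | add p q hp hq => simpa [add_sub_add_comm] using Ideal.add_mem _ hp hq
  | mul_X p i hp =>
      rw [map_mul, aeval_X]
      set q : MvPolynomial (Fin n) K := aeval (fun i => if i = b then 0 else X i) p with hq
      have h1 : p * X i - q * (if i = b then 0 else X i) =
          (p - q) * X i + q * (X i - if i = b then 0 else X i) := by ring
      rw [h1]
      refine Ideal.add_mem _ (Ideal.mul_mem_right _ _ hp) ?_
      split_ifs with h
      · rw [h, sub_zero]
        exact Ideal.mul_mem_left _ _ (Ideal.subset_span rfl)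
      · rw [sub_self, mul_zero]
        exact zero_mem _

private lemma sup_pow_le {R : Type*} [CommRing R] (A B : Ideal R) (t : ℕ) :
    (A ⊔ B) ^ t ≤ A ^ t ⊔ B := by
  induction t with
  | zero => simp
  | succ t ih =>
      calc (A ⊔ B) ^ (t + 1) = (A ⊔ B) ^ t * (A ⊔ B) := pow_succ _ _
      _ ≤ (A ^ t ⊔ B) * (A ⊔ B) := Ideal.mul_mono ih le_rfl
      _ ≤ A ^ (t + 1) ⊔ B := by
          rw [Ideal.sup_mul, Ideal.mul_sup, Ideal.mul_sup, ← pow_succ]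
          exact sup_le (sup_le le_sup_left (le_sup_of_le_right Ideal.mul_le_right))
            (sup_le (le_sup_of_le_right Ideal.mul_le_left)
              (le_sup_of_le_right Ideal.mul_le_left))

private lemma pow_mono' {R : Type*} [CommRing R] {A B : Ideal R} (h : A ≤ B) (t : ℕ) :
    A ^ t ≤ B ^ t := by
  induction t with
  | zero => simp
  | succ t ih => rw [pow_succ, pow_succ]; exact Ideal.mul_mono ih h

/-- For `n ≥ 3`, `t ≥ 1`, `I = I(P_n)` and `L = I(P_{n-1})` (both regarded as
ideals of `S = K[x_1, …, x_n]`), one has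
`((Iᵗ : x_{n-1}), x_n) = ((Lᵗ : x_{n-1}), x_n)`. -/
theorem pathIdeal_pow_colon_sup {K : Type*} [Field K] (n t : ℕ) (hn : 3 ≤ n) (ht : 1 ≤ t) :
    (((pathIdeal K n n) ^ t).colon ((Ideal.span {X (⟨n - 2, by omega⟩ : Fin n)} : Ideal (MvPolynomial (Fin n) K)) : Set (MvPolynomial (Fin n) K))) ⊔
        Ideal.span {X (⟨n - 1, by omega⟩ : Fin n)} =
      (((pathIdeal K n (n - 1)) ^ t).colon ((Ideal.span {X (⟨n - 2, by omega⟩ : Fin n)} : Ideal (MvPolynomial (Fin n) K)) : Set (MvPolynomial (Fin n) K))) ⊔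
        Ideal.span {X (⟨n - 1, by omega⟩ : Fin n)} := by
  set a : Fin n := ⟨n - 2, by omega⟩ with ha
  set b : Fin n := ⟨n - 1, by omega⟩ with hb
  have hab : a ≠ b := by
    intro h
    have := congrArg Fin.val h
    simp only [ha, hb] at this
    omega
  set φ : MvPolynomial (Fin n) K →ₐ[K] MvPolynomial (Fin n) K :=
    aeval (fun i => if i = b then 0 else X i) with hφ
  have hφb : φ (X b) = 0 := by simp [hφ]
  have hφa : φ (X a) = X a := by simp [hφ, hab]
  -- L ≤ I
  have hLI : pathIdeal K n (n - 1) ≤ pathIdeal K n n := by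
    apply Ideal.span_mono
    rintro p ⟨i, j, h1, h2, h3⟩
    exact ⟨i, j, h1, by omega, h3⟩
  -- I ≤ L ⊔ (X b)
  have hIL : pathIdeal K n n ≤ pathIdeal K n (n - 1) ⊔ Ideal.span {X b} := by
    rw [pathIdeal, Ideal.span_le]
    rintro p ⟨i, j, h1, h2, rfl⟩
    by_cases hc : (i : ℕ) + 2 ≤ n - 1
    · exact le_sup_left (α := Ideal (MvPolynomial (Fin n) K))
        (Ideal.subset_span ⟨i, j, h1, hc, rfl⟩)
    · have : j = b := by
        apply Fin.ext
        simp only [hb]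
        omega
      rw [this]
      exact le_sup_right (α := Ideal (MvPolynomial (Fin n) K))
        (Ideal.mul_mem_left _ _ (Ideal.subset_span rfl))
  -- φ maps L into L
  have hmapL : Ideal.map φ (pathIdeal K n (n - 1)) ≤ pathIdeal K n (n - 1) := by
    rw [pathIdeal, Ideal.map_span, Ideal.span_le]
    rintro _ ⟨p, ⟨i, j, h1, h2, rfl⟩, rfl⟩
    have hib : i ≠ b := by
      intro h; have := congrArg Fin.val h; simp only [hb] at this; omega
    have hjb : j ≠ b := by
      intro h; have := congrArg Fin.val h; simp only [hb] at this; omega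
    have : φ (X i * X j) = X i * X j := by simp [hφ, hib, hjb]
    rw [this]
    exact Ideal.subset_span ⟨i, j, h1, h2, rfl⟩
  apply le_antisymm
  · refine sup_le ?_ le_sup_right
    intro f hf
    rw [Ideal.mem_colon_span_singleton] at hf
    have h1 : f * X a ∈ (pathIdeal K n (n - 1)) ^ t ⊔ Ideal.span {X b} :=
      ((pow_mono' hIL t).trans (sup_pow_le _ _ t)) hf
    have h2 : φ (f * X a) ∈
        Ideal.map φ ((pathIdeal K n (n - 1)) ^ t ⊔ Ideal.span {X b}) :=
      Ideal.mem_map_of_mem _ h1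
    have h3 : Ideal.map φ ((pathIdeal K n (n - 1)) ^ t ⊔ Ideal.span {X b}) ≤
        (pathIdeal K n (n - 1)) ^ t := by
      rw [Ideal.map_sup, Ideal.map_pow, Ideal.map_span, Set.image_singleton, hφb]
      refine sup_le (pow_mono' hmapL t) ?_
      rw [Ideal.span_singleton_eq_bot.mpr rfl]
      exact bot_le
    have h4 : φ f * X a ∈ (pathIdeal K n (n - 1)) ^ t := by
      have : φ (f * X a) = φ f * X a := by rw [map_mul, hφa]
      rw [← this]
      exact h3 h2
    have h5 : f = φ f + (f - φ f) := by ring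
    rw [h5]
    exact Submodule.add_mem_sup (Ideal.mem_colon_span_singleton.mpr h4) (sub_aeval_mem b f)
  · exact sup_le_sup (Submodule.colon_mono (pow_mono' hLI t) le_rfl) le_rfl
end

section
/- Let m ≥ 4, t ≥ 1, K a field, S = K[x_1,…,x_m], and L = I(P_m) the edge ideal of the path P_m. Then ((L^t : x_m), x_{m−1}) = (I(P_{m−2})^t, x_{m−1}), where I(P_{m−2}) is generated by x_1x_2, …, x_{m−3}x_{m−2} in S. -/
open MvPolynomial Pointwise

/-- `(J ⊔ Y) ^ t ≤ J ^ t ⊔ Y` for ideals. -/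
lemma sup_pow_le_pow_sup {R : Type*} [CommRing R] (J Y : Ideal R) (t : ℕ) :
    (J ⊔ Y) ^ t ≤ J ^ t ⊔ Y := by
  induction t with
  | zero => simp [Ideal.one_eq_top]
  | succ n ih =>
    rw [pow_succ]
    calc (J ⊔ Y) ^ n * (J ⊔ Y) ≤ (J ^ n ⊔ Y) * (J ⊔ Y) := Ideal.mul_mono ih le_rfl
    _ ≤ J ^ (n + 1) ⊔ Y := by
        rw [Ideal.sup_mul, Ideal.mul_sup, Ideal.mul_sup]
        refine sup_le (sup_le ?_ ?_) (sup_le ?_ ?_)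
        · rw [← pow_succ]; exact le_sup_left
        · exact le_trans Ideal.mul_le_right le_sup_right
        · exact le_trans Ideal.mul_le_left le_sup_right
        · exact le_trans Ideal.mul_le_right le_sup_right

/-- A power of an ideal spanned by monomials with exponents satisfying an
additively-closed predicate `P` is again spanned by such monomials. -/
lemma span_monomial_pow_exists {K : Type*} [Field K] {σ : Type*} (E0 : Set (σ →₀ ℕ))
    (P : (σ →₀ ℕ) → Prop) (hP0 : P 0) (hPadd : ∀ a b, P a → P b → P (a + b))
    (hPE : ∀ d ∈ E0, P d) (n : ℕ) :
    ∃ T : Set (σ →₀ ℕ), (∀ d ∈ T, P d) ∧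
      (Ideal.span ((fun d => monomial d (1 : K)) '' E0)) ^ n =
        Ideal.span ((fun d => monomial d (1 : K)) '' T) := by
  induction n with
  | zero =>
    refine ⟨{0}, by simpa using hP0, ?_⟩
    rw [pow_zero, Set.image_singleton, Ideal.one_eq_top, eq_comm, Ideal.span_singleton_eq_top]
    simp [monomial_zero']
  | succ n ih =>
    obtain ⟨T, hT, hTeq⟩ := ih
    refine ⟨Set.image2 (· + ·) T E0, ?_, ?_⟩
    · rintro d ⟨a, ha, b, hb, rfl⟩
      exact hPadd _ _ (hT a ha) (hPE b hb)
    · rw [pow_succ, hTeq, Ideal.span_mul_span']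
      congr 1
      have h1 : ((fun d => monomial d (1 : K)) '' T) * ((fun d => monomial d (1 : K)) '' E0)
          = Set.image2 (fun a b => monomial a (1 : K) * monomial b (1 : K)) T E0 := by
        rw [← Set.image2_mul, Set.image2_image_left, Set.image2_image_right]
      rw [h1, Set.image_image2]
      apply Set.image2_congr
      intro a _ b _
      rw [monomial_mul, one_mul]

/-- For `m ≥ 4`, `t ≥ 1` and `L = I(P_m)` the edge ideal of the path `P_m` in
`S = K[x_1, …, x_m]`, one has `((Lᵗ : x_m), x_{m-1}) = (I(P_{m-2})ᵗ, x_{m-1})`,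
where `I(P_{m-2})` is generated by `x_1 x_2, …, x_{m-3} x_{m-2}` in `S`. -/
theorem pathIdeal_pow_colon_last_var {K : Type*} [Field K] (m t : ℕ) (hm : 4 ≤ m)
    (ht : 1 ≤ t) :
    (((pathIdeal K m m) ^ t).colon ((Ideal.span {X (⟨m - 1, by omega⟩ : Fin m)} : Ideal (MvPolynomial (Fin m) K)) : Set (MvPolynomial (Fin m) K))) ⊔
        Ideal.span {X (⟨m - 2, by omega⟩ : Fin m)} =
      (pathIdeal K m (m - 2)) ^ t ⊔ Ideal.span {X (⟨m - 2, by omega⟩ : Fin m)} := by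
  set lastv : Fin m := ⟨m - 1, by omega⟩ with hlastv
  set yv : Fin m := ⟨m - 2, by omega⟩ with hyvv
  -- the monomial generators of `pathIdeal K m (m-2)`
  set φ : (Fin m →₀ ℕ) → MvPolynomial (Fin m) K := fun d => monomial d (1 : K) with hφ
  set E0 : Set (Fin m →₀ ℕ) :=
    {d | ∃ i j : Fin m, (j : ℕ) = (i : ℕ) + 1 ∧ (i : ℕ) + 2 ≤ m - 2 ∧
      d = Finsupp.single i 1 + Finsupp.single j 1} with hE0
  have hXmul : ∀ i j : Fin m, (X i * X j : MvPolynomial (Fin m) K)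
      = φ (Finsupp.single i 1 + Finsupp.single j 1) := by
    intro i j
    simp only [hφ, X, monomial_mul, one_mul]
  have hJ : pathIdeal K m (m - 2) = Ideal.span (φ '' E0) := by
    unfold pathIdeal
    congr 1
    ext p
    constructor
    · rintro ⟨i, j, hj, hi, rfl⟩
      exact ⟨Finsupp.single i 1 + Finsupp.single j 1, ⟨i, j, hj, hi, rfl⟩, (hXmul i j).symm⟩
    · rintro ⟨d, ⟨i, j, hj, hi, rfl⟩, rfl⟩
      exact ⟨i, j, hj, hi, (hXmul i j).symm⟩
  -- property: the exponent of the last variable is zero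
  obtain ⟨T, hT, hTeq⟩ := span_monomial_pow_exists (K := K) E0 (fun d => d lastv = 0)
    (by simp)
    (fun a b ha hb => by simp [Finsupp.add_apply, ha, hb])
    (by
      rintro d ⟨i, j, hj, hi, rfl⟩
      have hine : i ≠ lastv := by
        intro h; rw [h] at hi; simp only [hlastv] at hi; omega
      have hjne : j ≠ lastv := by
        intro h
        rw [h] at hj
        simp only [hlastv] at hj
        have : (i : ℕ) < m := i.isLt
        omega
      simp [Finsupp.add_apply, Finsupp.single_eq_of_ne (Ne.symm hine), Finsupp.single_eq_of_ne (Ne.symm hjne)])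
    t
  -- the right-hand side as a monomial ideal
  set T' : Set (Fin m →₀ ℕ) := T ∪ {Finsupp.single yv 1} with hT'
  have hXy : (X yv : MvPolynomial (Fin m) K) = φ (Finsupp.single yv 1) := by
    simp only [hφ, X]
  have hRHS : (pathIdeal K m (m - 2)) ^ t ⊔ Ideal.span {X yv} = Ideal.span (φ '' T') := by
    rw [hJ, hTeq, hT', Set.image_union, Set.image_singleton, Ideal.span_union, hXy]
  have hT'prop : ∀ d ∈ T', d lastv = 0 := by
    rintro d (hd | hd)
    · exact hT d hd
    · rw [Set.mem_singleton_iff] at hd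
      subst hd
      have : yv ≠ lastv := by
        intro h
        have := congrArg Fin.val h
        simp only [hyvv, hlastv] at this
        omega
      simp [Finsupp.single_eq_of_ne (Ne.symm this)]
  -- L ≤ J ⊔ (X yv)
  have hLle : pathIdeal K m m ≤ pathIdeal K m (m - 2) ⊔ Ideal.span {X yv} := by
    unfold pathIdeal
    rw [Ideal.span_le]
    rintro p ⟨i, j, hj, hi, rfl⟩
    by_cases hcase : (i : ℕ) + 2 ≤ m - 2
    · exact le_sup_left (α := Ideal (MvPolynomial (Fin m) K))
        (Ideal.subset_span ⟨i, j, hj, hcase, rfl⟩)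
    · have hjlt : (j : ℕ) < m := j.isLt
      have : (i : ℕ) = m - 3 ∨ (i : ℕ) = m - 2 := by omega
      rcases this with h3 | h2
      · have : j = yv := by
          apply Fin.ext
          simp only [hyvv]
          omega
        subst this
        exact le_sup_right (α := Ideal (MvPolynomial (Fin m) K))
          (Ideal.mem_span_singleton.mpr ⟨X i, mul_comm _ _⟩)
      · have : i = yv := by
          apply Fin.ext
          simp only [hyvv]
          omega
        subst this
        exact le_sup_right (α := Ideal (MvPolynomial (Fin m) K))
          (Ideal.mem_span_singleton.mpr ⟨X j, rfl⟩)
  -- L^t ≤ span (φ '' T')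
  have hLt : (pathIdeal K m m) ^ t ≤ Ideal.span (φ '' T') := by
    rw [← hRHS]
    calc (pathIdeal K m m) ^ t
        ≤ (pathIdeal K m (m - 2) ⊔ Ideal.span {X yv}) ^ t := Ideal.pow_right_mono hLle t
      _ ≤ (pathIdeal K m (m - 2)) ^ t ⊔ Ideal.span {X yv} := sup_pow_le_pow_sup _ _ t
  apply le_antisymm
  · refine sup_le ?_ le_sup_right
    intro f hf
    rw [Ideal.mem_colon_span_singleton] at hf
    have hf' : f * X lastv ∈ Ideal.span (φ '' T') := hLt hf
    rw [hRHS]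
    rw [hφ] at hf' ⊢
    rw [mem_ideal_span_monomial_image] at hf' ⊢
    intro u hu
    have hu' : u + Finsupp.single lastv 1 ∈ (f * X lastv).support := by
      rw [support_mul_X]
      exact Finset.mem_map_of_mem _ hu
    obtain ⟨d, hd, hdu⟩ := hf' _ hu'
    refine ⟨d, hd, ?_⟩
    rw [Finsupp.le_def] at hdu ⊢
    intro i
    by_cases hi : i = lastv
    · subst hi
      rw [hT'prop d hd]
      exact Nat.zero_le _
    · have := hdu i
      rwa [Finsupp.add_apply, Finsupp.single_eq_of_ne hi, Nat.add_zero] at this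
  · refine sup_le ?_ le_sup_right
    have hJL : pathIdeal K m (m - 2) ≤ pathIdeal K m m := by
      apply Ideal.span_mono
      rintro p ⟨i, j, hj, hi, rfl⟩
      exact ⟨i, j, hj, by omega, rfl⟩
    refine le_trans ?_ le_sup_left
    intro f hf
    rw [Ideal.mem_colon_span_singleton]
    exact Ideal.mul_mem_right _ _ (Ideal.pow_right_mono hJL t hf)
end

section
/- Let k ≥ 2, n = 3k, and let I = I(P_n) be the edge ideal of the path P_n in S = K[x_1,…,x_n] over a field K. Let P = {a ∈ N^n : x^a ∉ I and x^a divides x_1x_2⋯x_n} be the characteristic poset of S/I, let α = Σ_{i=1}^{k−1} e_{3i−1} ∈ N^n, and let P_{k+1,α} = {a ∈ P : |a| = k+1 and x^α divides x^a}. Then P_{k+1,α} = {α + e_{3k−2} + e_{3k}}; moreover A = Σ_{i=1}^{k} e_{3i−1} belongs to P and |A| = k. -/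
open MvPolynomial

namespace CharPosetAux

variable {K : Type*} [Field K]

lemma pathIdeal_eq (n : ℕ) : pathIdeal K n n =
    Ideal.span ((fun s => monomial s (1 : K)) ''
      {s | ∃ i j : Fin n, (j : ℕ) = (i : ℕ) + 1 ∧ (i : ℕ) + 2 ≤ n ∧
        s = Finsupp.single i 1 + Finsupp.single j 1}) := by
  unfold pathIdeal
  congr 1
  ext p
  simp only [Set.mem_setOf_eq, Set.mem_image]
  constructor
  · rintro ⟨i, j, h1, h2, rfl⟩
    exact ⟨_, ⟨i, j, h1, h2, rfl⟩, by rw [X, X, monomial_mul, one_mul]⟩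
  · rintro ⟨s, ⟨i, j, h1, h2, rfl⟩, rfl⟩
    exact ⟨i, j, h1, h2, by rw [X, X, monomial_mul, one_mul]⟩

lemma pair_le_iff {n : ℕ} {i j : Fin n} (hij : i ≠ j) (a : Fin n →₀ ℕ) :
    Finsupp.single i 1 + Finsupp.single j 1 ≤ a ↔ a i ≠ 0 ∧ a j ≠ 0 := by
  classical
  rw [Finsupp.le_def]
  constructor
  · intro h
    have h1 := h i
    have h2 := h j
    rw [Finsupp.add_apply, Finsupp.single_eq_same, Finsupp.single_eq_of_ne' (Ne.symm hij)] at h1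
    rw [Finsupp.add_apply, Finsupp.single_eq_same, Finsupp.single_eq_of_ne' hij] at h2
    omega
  · rintro ⟨h1, h2⟩ x
    rw [Finsupp.add_apply]
    by_cases hxi : x = i
    · subst hxi
      rw [Finsupp.single_eq_same, Finsupp.single_eq_of_ne' (Ne.symm hij)]
      omega
    · by_cases hxj : x = j
      · subst hxj
        rw [Finsupp.single_eq_same, Finsupp.single_eq_of_ne' hij]
        omega
      · rw [Finsupp.single_eq_of_ne' (fun e => hxi e.symm),
          Finsupp.single_eq_of_ne' (fun e => hxj e.symm)]
        omega

lemma mem_pathIdeal_iff {n : ℕ} (a : Fin n →₀ ℕ) :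
    (monomial a (1 : K)) ∈ pathIdeal K n n ↔
      ∃ i j : Fin n, (j : ℕ) = (i : ℕ) + 1 ∧ (i : ℕ) + 2 ≤ n ∧ a i ≠ 0 ∧ a j ≠ 0 := by
  rw [pathIdeal_eq, mem_ideal_span_monomial_image]
  classical
  rw [support_monomial, if_neg (one_ne_zero)]
  simp only [Finset.mem_singleton, forall_eq, Set.mem_setOf_eq]
  constructor
  · rintro ⟨si, ⟨i, j, h1, h2, rfl⟩, hle⟩
    have hij : i ≠ j := by intro e; rw [e] at h1; omega
    exact ⟨i, j, h1, h2, (pair_le_iff hij a).mp hle⟩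
  · rintro ⟨i, j, h1, h2, h3⟩
    have hij : i ≠ j := by intro e; rw [e] at h1; omega
    exact ⟨_, ⟨i, j, h1, h2, rfl⟩, (pair_le_iff hij a).mpr h3⟩

lemma monomial_dvd_iff {n : ℕ} (s t : Fin n →₀ ℕ) :
    (monomial s (1 : K)) ∣ monomial t 1 ↔ s ≤ t := by
  simp [monomial_dvd_monomial]

lemma sum_single_apply {n m : ℕ} (g : Fin m → Fin n) (hg : Function.Injective g) (j : Fin n) :
    (∑ i : Fin m, Finsupp.single (g i) (1 : ℕ)) j = if ∃ i, g i = j then 1 else 0 := by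
  classical
  rw [Finsupp.finset_sum_apply]
  by_cases h : ∃ i, g i = j
  · obtain ⟨i0, rfl⟩ := h
    rw [if_pos ⟨i0, rfl⟩, Finset.sum_eq_single i0]
    · simp
    · intro b _ hb
      rw [Finsupp.single_apply, if_neg (fun e => hb (hg e))]
    · simp
  · rw [if_neg h]
    refine Finset.sum_eq_zero fun i _ => ?_
    rw [Finsupp.single_apply, if_neg (fun e => h ⟨i, e⟩)]

lemma sum_sum_single {n m : ℕ} (g : Fin m → Fin n) :
    ∑ j : Fin n, (∑ i : Fin m, Finsupp.single (g i) (1 : ℕ)) j = m := by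
  classical
  simp_rw [Finsupp.finset_sum_apply]
  rw [Finset.sum_comm]
  have h : ∀ i : Fin m, ∑ j : Fin n, (Finsupp.single (g i) (1 : ℕ)) j = 1 := by
    intro i
    simp [Finsupp.single_apply]
  simp [h]

lemma sum_single_fin {n : ℕ} (p : Fin n) (v : ℕ) :
    ∑ j : Fin n, (Finsupp.single p v) j = v := by
  classical
  simp [Finsupp.single_apply]

lemma sum_ite_fin (n c : ℕ) (hc : c < n) (v : ℕ) :
    (∑ j : Fin n, if (j : ℕ) = c then v else 0) = v := by
  classical
  rw [Finset.sum_eq_single (⟨c, hc⟩ : Fin n)]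
  · simp
  · intro b _ hb
    exact if_neg (fun e => hb (Fin.ext e))
  · simp

lemma dvd_prodX_iff {n : ℕ} (a : Fin n →₀ ℕ) :
    (monomial a (1 : K)) ∣ ∏ i : Fin n, X i ↔ ∀ j, a j ≤ 1 := by
  have h : (∏ i : Fin n, X i : MvPolynomial (Fin n) K)
      = monomial (∑ i : Fin n, Finsupp.single i 1) 1 := by
    rw [monomial_sum_one]
    rfl
  rw [h, monomial_dvd_iff, Finsupp.le_def]
  have hid : ∀ j : Fin n, (∑ i : Fin n, Finsupp.single i (1 : ℕ)) j = 1 := by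
    intro j
    rw [sum_single_apply (fun i => i) (fun _ _ e => e)]
    simp
  exact forall_congr' fun j => by rw [hid j]

end CharPosetAux

open CharPosetAux in
/-- Let `k ≥ 2`, `n = 3k` and `I = I(P_n)` in `S = K[x_1, …, x_n]`. In the
characteristic poset `P = {a ∈ ℕⁿ : x ^ a ∉ I and x ^ a ∣ x_1 ⋯ x_n}` of `S/I`,
with `α = Σ_{i=1}^{k-1} e_{3i-1}` (written 0-indexed below), one has
`P_{k+1, α} = {α + e_{3k-2} + e_{3k}}`; moreover `A = Σ_{i=1}^{k} e_{3i-1}`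
belongs to `P` and `|A| = k`. -/
theorem charPoset_path_three_mul {K : Type*} [Field K] (k n : ℕ) (hk : 2 ≤ k)
    (hn : n = 3 * k) :
    ({a : Fin n →₀ ℕ |
        ((monomial a (1 : K)) ∉ pathIdeal K n n ∧ (monomial a (1 : K)) ∣ ∏ i : Fin n, X i) ∧
        (∑ j : Fin n, a j) = k + 1 ∧
        (monomial (∑ i : Fin (k - 1), Finsupp.single (⟨3 * (i : ℕ) + 1, by omega⟩ : Fin n) 1)
          (1 : K)) ∣ (monomial a (1 : K))} =
      {(∑ i : Fin (k - 1), Finsupp.single (⟨3 * (i : ℕ) + 1, by omega⟩ : Fin n) 1) +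
        Finsupp.single (⟨3 * k - 3, by omega⟩ : Fin n) 1 +
        Finsupp.single (⟨3 * k - 1, by omega⟩ : Fin n) 1}) ∧
    ((monomial (∑ i : Fin k, Finsupp.single (⟨3 * (i : ℕ) + 1, by omega⟩ : Fin n) 1)
        (1 : K)) ∉ pathIdeal K n n ∧
      (monomial (∑ i : Fin k, Finsupp.single (⟨3 * (i : ℕ) + 1, by omega⟩ : Fin n) 1)
        (1 : K)) ∣ ∏ i : Fin n, X i) ∧
    (∑ j : Fin n, (∑ i : Fin k, Finsupp.single (⟨3 * (i : ℕ) + 1, by omega⟩ : Fin n) 1) j)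
      = k := by
  classical
  subst hn
  have hinj1 : Function.Injective (fun i : Fin (k-1) =>
      (⟨3 * (i : ℕ) + 1, by omega⟩ : Fin (3*k))) := by
    intro x y e
    have h := Fin.ext_iff.mp e
    simp only [Fin.val_mk] at h
    exact Fin.ext (by omega)
  have hinj2 : Function.Injective (fun i : Fin k =>
      (⟨3 * (i : ℕ) + 1, by omega⟩ : Fin (3*k))) := by
    intro x y e
    have h := Fin.ext_iff.mp e
    simp only [Fin.val_mk] at h
    exact Fin.ext (by omega)
  -- pointwise value of α
  have hαap : ∀ j : Fin (3*k),
      (∑ i : Fin (k-1), Finsupp.single (⟨3*(i:ℕ)+1, by omega⟩ : Fin (3*k)) 1) j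
        = if (j:ℕ) % 3 = 1 ∧ (j:ℕ) < 3*k-3 then 1 else 0 := by
    intro j
    rw [sum_single_apply _ hinj1 j]
    by_cases h : (j:ℕ) % 3 = 1 ∧ (j:ℕ) < 3*k - 3
    · rw [if_pos h, if_pos]
      refine ⟨⟨((j:ℕ)-1)/3, by omega⟩, Fin.ext ?_⟩
      simp only [Fin.val_mk]
      omega
    · rw [if_neg h, if_neg]
      rintro ⟨i, hi⟩
      have hi' := Fin.ext_iff.mp hi
      simp only [Fin.val_mk] at hi'
      have hilt : (i:ℕ) < k - 1 := i.isLt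
      exact h ⟨by omega, by omega⟩
  -- pointwise value of A
  have hAap : ∀ j : Fin (3*k),
      (∑ i : Fin k, Finsupp.single (⟨3*(i:ℕ)+1, by omega⟩ : Fin (3*k)) 1) j
        = if (j:ℕ) % 3 = 1 then 1 else 0 := by
    intro j
    rw [sum_single_apply _ hinj2 j]
    by_cases h : (j:ℕ) % 3 = 1
    · rw [if_pos h, if_pos]
      have hjlt : (j:ℕ) < 3*k := j.isLt
      refine ⟨⟨((j:ℕ)-1)/3, by omega⟩, Fin.ext ?_⟩
      simp only [Fin.val_mk]
      omega
    · rw [if_neg h, if_neg]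
      rintro ⟨i, hi⟩
      have hi' := Fin.ext_iff.mp hi
      simp only [Fin.val_mk] at hi'
      exact h (by omega)
  refine ⟨?_, ⟨?_, ?_⟩, ?_⟩
  · -- the set equality
    ext a
    simp only [Set.mem_setOf_eq, Set.mem_singleton_iff]
    constructor
    · rintro ⟨⟨h1, h2⟩, h3, h4⟩
      rw [mem_pathIdeal_iff] at h1
      rw [dvd_prodX_iff] at h2
      rw [monomial_dvd_iff, Finsupp.le_def] at h4
      -- reformulate everything through b : ℕ → ℕ
      set b : ℕ → ℕ := fun m => if h : m < 3*k then a ⟨m, h⟩ else 0 with hbdef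
      have hb : ∀ j : Fin (3*k), a j = b (j:ℕ) := by
        intro j
        rw [hbdef]
        simp only [j.isLt, dif_pos, Fin.eta]
      have hbm : ∀ (m : ℕ) (h : m < 3*k), b m = a ⟨m, h⟩ := by
        intro m h
        rw [hbdef]
        simp only [h, dif_pos]
      have hno : ∀ i : ℕ, i + 2 ≤ 3*k → b i = 0 ∨ b (i+1) = 0 := by
        intro i hi
        by_contra hcon
        push_neg at hcon
        refine h1 ⟨⟨i, by omega⟩, ⟨i+1, by omega⟩, rfl, hi, ?_, ?_⟩
        · rw [← hbm i (by omega)]; exact hcon.1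
        · rw [← hbm (i+1) (by omega)]; exact hcon.2
      have hb1 : ∀ m : ℕ, b m ≤ 1 := by
        intro m
        by_cases h : m < 3*k
        · rw [hbm m h]; exact h2 _
        · rw [hbdef]; simp [h]
      have hbα : ∀ m : ℕ, m % 3 = 1 → m < 3*k - 3 → 1 ≤ b m := by
        intro m hm1 hm2
        have hlt : m < 3*k := by omega
        have h4' := h4 ⟨m, hlt⟩
        rw [hαap ⟨m, hlt⟩] at h4'
        simp only [Fin.val_mk] at h4'
        rw [if_pos ⟨hm1, hm2⟩] at h4'
        rw [hbm m hlt]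
        exact h4'
      -- the structure of b
      have hstruct : ∀ m : ℕ, m < 3*k →
          b m = (if m % 3 = 1 ∧ m < 3*k-3 then 1 else 0)
            + (if m = 3*k-3 then b (3*k-3) else 0)
            + (if m = 3*k-2 then b (3*k-2) else 0)
            + (if m = 3*k-1 then b (3*k-1) else 0) := by
        intro m hm
        rcases lt_or_ge m (3*k-3) with hlt | hge
        · rw [if_neg (show ¬(m = 3*k-3) by omega), if_neg (show ¬(m = 3*k-2) by omega),
            if_neg (show ¬(m = 3*k-1) by omega)]
          have h3m : m % 3 = 0 ∨ m % 3 = 1 ∨ m % 3 = 2 := by omega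
          rcases h3m with h3m | h3m | h3m
          · rw [if_neg (show ¬(m % 3 = 1 ∧ m < 3*k-3) by omega)]
            have hn1 := hno m (by omega)
            have ha1 := hbα (m+1) (by omega) (by omega)
            omega
          · rw [if_pos (show m % 3 = 1 ∧ m < 3*k-3 from ⟨h3m, hlt⟩)]
            have := hbα m h3m hlt
            have := hb1 m
            omega
          · rw [if_neg (show ¬(m % 3 = 1 ∧ m < 3*k-3) by omega)]
            have hn1 := hno (m-1) (by omega)
            have ha1 := hbα (m-1) (by omega) (by omega)
            have he : m - 1 + 1 = m := by omega
            rw [he] at hn1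
            omega
        · have h3m : m = 3*k-3 ∨ m = 3*k-2 ∨ m = 3*k-1 := by omega
          rcases h3m with rfl | rfl | rfl
          · rw [if_neg (show ¬((3*k-3) % 3 = 1 ∧ 3*k-3 < 3*k-3) by omega),
              if_pos rfl, if_neg (show ¬(3*k-3 = 3*k-2) by omega),
              if_neg (show ¬(3*k-3 = 3*k-1) by omega)]
            omega
          · rw [if_neg (show ¬((3*k-2) % 3 = 1 ∧ 3*k-2 < 3*k-3) by omega),
              if_neg (show ¬(3*k-2 = 3*k-3) by omega), if_pos rfl,
              if_neg (show ¬(3*k-2 = 3*k-1) by omega)]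
            omega
          · rw [if_neg (show ¬((3*k-1) % 3 = 1 ∧ 3*k-1 < 3*k-3) by omega),
              if_neg (show ¬(3*k-1 = 3*k-3) by omega),
              if_neg (show ¬(3*k-1 = 3*k-2) by omega), if_pos rfl]
            omega
      -- the sum identity
      have hsum : k + 1 = (k - 1) + b (3*k-3) + b (3*k-2) + b (3*k-1) := by
        rw [← h3]
        have e1 : ∑ j : Fin (3*k), a j
            = ∑ j : Fin (3*k), ((if (j:ℕ) % 3 = 1 ∧ (j:ℕ) < 3*k-3 then 1 else 0)
              + (if (j:ℕ) = 3*k-3 then b (3*k-3) else 0)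
              + (if (j:ℕ) = 3*k-2 then b (3*k-2) else 0)
              + (if (j:ℕ) = 3*k-1 then b (3*k-1) else 0)) := by
          refine Finset.sum_congr rfl fun j _ => ?_
          rw [hb j, hstruct (j:ℕ) j.isLt]
        rw [e1, Finset.sum_add_distrib, Finset.sum_add_distrib, Finset.sum_add_distrib]
        have e2 : ∑ j : Fin (3*k), (if (j:ℕ) % 3 = 1 ∧ (j:ℕ) < 3*k-3 then 1 else 0)
            = k - 1 := by
          have : ∀ j : Fin (3*k), (if (j:ℕ) % 3 = 1 ∧ (j:ℕ) < 3*k-3 then 1 else 0)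
              = (∑ i : Fin (k-1), Finsupp.single (⟨3*(i:ℕ)+1, by omega⟩ : Fin (3*k)) 1) j :=
            fun j => (hαap j).symm
          rw [Finset.sum_congr rfl fun j _ => this j]
          exact sum_sum_single _
        rw [e2, sum_ite_fin _ _ (by omega), sum_ite_fin _ _ (by omega),
          sum_ite_fin _ _ (by omega)]
      have hc2 : b (3*k-2) = 0 := by
        by_contra hc
        have hn1 := hno (3*k-3) (by omega)
        have hn2 := hno (3*k-2) (by omega)
        have e1 : 3*k-3+1 = 3*k-2 := by omega
        have e2 : 3*k-2+1 = 3*k-1 := by omega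
        rw [e1] at hn1
        rw [e2] at hn2
        have := hb1 (3*k-2)
        omega
      have hc1 : b (3*k-3) = 1 := by
        have := hb1 (3*k-3)
        have := hb1 (3*k-1)
        omega
      have hc3 : b (3*k-1) = 1 := by
        have := hb1 (3*k-3)
        have := hb1 (3*k-1)
        omega
      -- conclude
      ext j
      rw [Finsupp.add_apply, Finsupp.add_apply, hαap j, Finsupp.single_apply,
        Finsupp.single_apply, hb j, hstruct (j:ℕ) j.isLt, hc1, hc2, hc3]
      simp only [Fin.ext_iff, Fin.val_mk]
      split_ifs <;> omega
    · rintro rfl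
      refine ⟨⟨?_, ?_⟩, ?_, ?_⟩
      · -- not in the path ideal
        rw [mem_pathIdeal_iff]
        rintro ⟨i, j, hji, hin, hi, hj⟩
        rw [Finsupp.add_apply, Finsupp.add_apply, hαap i, Finsupp.single_apply,
          Finsupp.single_apply] at hi
        rw [Finsupp.add_apply, Finsupp.add_apply, hαap j, Finsupp.single_apply,
          Finsupp.single_apply] at hj
        simp only [Fin.ext_iff, Fin.val_mk] at hi hj
        split_ifs at hi hj <;> omega
      · -- divides the product of variables
        rw [dvd_prodX_iff]
        intro j
        rw [Finsupp.add_apply, Finsupp.add_apply, hαap j, Finsupp.single_apply,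
          Finsupp.single_apply]
        simp only [Fin.ext_iff, Fin.val_mk]
        split_ifs <;> omega
      · -- the sum is k + 1
        have e1 : ∑ j : Fin (3*k),
            (((∑ i : Fin (k-1), Finsupp.single (⟨3*(i:ℕ)+1, by omega⟩ : Fin (3*k)) 1) +
              Finsupp.single (⟨3 * k - 3, by omega⟩ : Fin (3*k)) 1 +
              Finsupp.single (⟨3 * k - 1, by omega⟩ : Fin (3*k)) 1 : Fin (3*k) →₀ ℕ)) j
            = k + 1 := by
          simp only [Finsupp.add_apply]
          rw [Finset.sum_add_distrib, Finset.sum_add_distrib, sum_sum_single,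
            sum_single_fin, sum_single_fin]
          omega
        exact e1
      · -- α divides it
        rw [monomial_dvd_iff, Finsupp.le_def]
        intro j
        rw [Finsupp.add_apply, Finsupp.add_apply, hαap j]
        split_ifs <;> omega
  · -- A not in path ideal
    rw [mem_pathIdeal_iff]
    rintro ⟨i, j, hji, hin, hi, hj⟩
    rw [hAap i] at hi
    rw [hAap j] at hj
    split_ifs at hi hj <;> omega
  · -- A divides the product
    rw [dvd_prodX_iff]
    intro j
    rw [hAap j]
    split_ifs <;> omega
  · -- |A| = k
    exact sum_sum_single _
end
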